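/- arXiv:2208.02184 — 3 statements merged into one kernel-verified Lean document; each statement's English description precedes it below -/
import Mathlib

section
/- For a transient simple random walk on Z^d, d ≥ 3, and finite lists Z_1 = {x_1,...,x_{j_1}} and Z_2 = {x_{j_1+1},...,x_{j_1+j_2}} of points (not necessarily distinct), one has Cap(Z_1 ∪ Z_2) ≤ Cap(Z_2) + (j_1 + j_2) / min_{x ∈ Z_1 \ Z_2} { ∑_{i=1}^{j_1+j_2} G(x_i, x) }. -/
open MeasureTheory ProbabilityTheory Finset
open scoped ENNReal

noncomputable section

/-- The `d`-dimensional integer lattice. -/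
abbrev Zd (d : ℕ) := Fin d → ℤ

/-- The `2d` unit steps of the simple random walk on `ℤ^d`. -/
def srwSteps (d : ℕ) : Finset (Zd d) :=
  Finset.univ.image (fun p : Fin d × Bool =>
    fun j => if j = p.1 then (if p.2 then 1 else -1) else 0)

/-- The uniform step distribution of the simple random walk on `ℤ^d`. -/
def stepMeasure (d : ℕ) : Measure (Zd d) :=
  ((srwSteps d).card : ENNReal)⁻¹ • ∑ x ∈ srwSteps d, Measure.dirac x

/-- `X` is the i.i.d. sequence of increments of a simple random walk on `ℤ^d`
under the probability measure `P`. -/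
structure IsSRW (d : ℕ) {Ω : Type} [MeasurableSpace Ω] (P : Measure Ω)
    (X : ℕ → Ω → Zd d) : Prop where
  prob : IsProbabilityMeasure P
  meas : ∀ n, Measurable (X n)
  indep : iIndepFun X P
  ident : ∀ n, P.map (X n) = stepMeasure d

variable {d : ℕ} {Ω : Type} [MeasurableSpace Ω] {P : Measure Ω} {X : ℕ → Ω → Zd d}

lemma meas_single (hX : IsSRW d P X) (n : ℕ) (b : Zd d) :
    P (X n ⁻¹' {b}) = stepMeasure d {b} := by
  rw [← hX.ident n, Measure.map_apply (hX.meas n) (measurableSet_singleton b)]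

lemma atom (hX : IsSRW d P X) (off K : ℕ) (a : Fin K → Zd d) :
    P (⋂ i : Fin K, X (off + i) ⁻¹' {a i}) = ∏ i : Fin K, stepMeasure d {a i} := by
  classical
  set s : ℕ → Set Ω := fun j =>
    if h : off ≤ j ∧ j - off < K then X j ⁻¹' {a ⟨j - off, h.2⟩} else Set.univ with hs
  have hsm : ∀ j, MeasurableSet[(inferInstance : MeasurableSpace (Zd d)).comap (X j)] (s j) := by
    intro j
    by_cases h : off ≤ j ∧ j - off < K
    · exact ⟨{a ⟨j - off, h.2⟩}, (Set.to_countable _).measurableSet, by simp [hs, h]⟩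
    · exact ⟨Set.univ, MeasurableSet.univ, by simp [hs, h]⟩
  have key : ∀ i : Fin K, s (off + i) = X (off + i) ⁻¹' {a i} := by
    intro i
    have h : off ≤ off + (i : ℕ) ∧ (off + (i : ℕ)) - off < K := by
      simp [Nat.add_sub_cancel_left, i.isLt]
    rw [hs]
    simp only [h, dif_pos]
    congr 1
    · congr 1
      ext
      simp [Nat.add_sub_cancel_left]
  have hinj : Set.InjOn (fun i => off + i) (Finset.range K : Set ℕ) :=
    fun i _ j _ h => by simpa using h
  have heq : (⋂ j ∈ (Finset.range K).image (fun i => off + i), s j)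
      = ⋂ i : Fin K, X (off + i) ⁻¹' {a i} := by
    ext ω
    simp only [Set.mem_iInter, Finset.mem_image, Finset.mem_range]
    constructor
    · intro h i
      rw [← key i]
      exact h _ ⟨i, i.isLt, rfl⟩
    · rintro h j ⟨i, hi, rfl⟩
      have h2 := key ⟨i, hi⟩
      simp only [Fin.val_mk] at h2
      rw [h2]
      exact h ⟨i, hi⟩
  rw [← heq, hX.indep.meas_biInter (fun j _ => hsm j), Finset.prod_image hinj]
  rw [← Fin.prod_univ_eq_prod_range (fun i => P (s (off + i))) K]
  · congr 1
    ext i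
    rw [key i, meas_single hX]

def tup (X : ℕ → Ω → Zd d) (off K : ℕ) : Ω → (Fin K → Zd d) := fun ω i => X (off + i) ω

lemma tup_measurable (hX : IsSRW d P X) (off K : ℕ) : Measurable (tup X off K) :=
  measurable_pi_lambda _ fun i => hX.meas (off + i)

lemma tup_preimage_singleton (off K : ℕ) (a : Fin K → Zd d) :
    tup X off K ⁻¹' {a} = ⋂ i : Fin K, X (off + i) ⁻¹' {a i} := by
  ext ω
  simp [tup, funext_iff]

lemma meas_tup (hX : IsSRW d P X) (off K : ℕ) (S : Set (Fin K → Zd d)) :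
    P (tup X off K ⁻¹' S) = ∑' a : S, ∏ i : Fin K, stepMeasure d {(a : Fin K → Zd d) i} := by
  have hdec : tup X off K ⁻¹' S = ⋃ a : S, tup X off K ⁻¹' {(a : Fin K → Zd d)} := by
    ext ω; simp [Set.mem_iUnion]
  rw [hdec, measure_iUnion]
  · exact tsum_congr fun a => by rw [tup_preimage_singleton, atom hX]
  · intro a b hab
    have : ({(a : Fin K → Zd d)} : Set _) ∩ {(b : Fin K → Zd d)} = ∅ := by
      simp only [Set.singleton_inter_eq_empty, Set.mem_singleton_iff]
      exact fun h => hab (Subtype.coe_injective h)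
    simp only [Set.disjoint_iff_inter_eq_empty, ← Set.preimage_inter, this, Set.preimage_empty]
  · exact fun a => (tup_measurable hX off K) (Set.to_countable _).measurableSet

lemma meas_tup_shift (hX : IsSRW d P X) (off K : ℕ) (S : Set (Fin K → Zd d)) :
    P (tup X off K ⁻¹' S) = P (tup X 0 K ⁻¹' S) := by
  rw [meas_tup hX, meas_tup hX]

def appendSetEquiv {α : Type*} {n M : ℕ} (S₁ : Set (Fin n → α)) (S₂ : Set (Fin M → α)) :
    S₁ × S₂ ≃ {v : Fin (n+M) → α | (fun i : Fin n => v (Fin.castAdd M i)) ∈ S₁ ∧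
      (fun i : Fin M => v (Fin.natAdd n i)) ∈ S₂} where
  toFun p := ⟨Fin.append p.1.1 p.2.1, by
    constructor
    · convert p.1.2 using 1
      funext i; simp [Fin.append_left]
    · convert p.2.2 using 1
      funext i; simp [Fin.append_right]⟩
  invFun v := (⟨fun i => (v : Fin (n+M) → α) (Fin.castAdd M i), v.2.1⟩,
    ⟨fun i => (v : Fin (n+M) → α) (Fin.natAdd n i), v.2.2⟩)
  left_inv p := by
    ext <;> simp [Fin.append_left, Fin.append_right]
  right_inv v := by
    ext : 1
    exact Fin.append_castAdd_natAdd

@[simp] lemma appendSetEquiv_coe {α : Type*} {n M : ℕ} (S₁ : Set (Fin n → α))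
    (S₂ : Set (Fin M → α)) (p : S₁ × S₂) :
    ((appendSetEquiv S₁ S₂ p : _) : Fin (n+M) → α) = Fin.append p.1.1 p.2.1 := rfl

lemma meas_tup_inter (hX : IsSRW d P X) (n M : ℕ) (S₁ : Set (Fin n → Zd d))
    (S₂ : Set (Fin M → Zd d)) :
    P (tup X 0 n ⁻¹' S₁ ∩ tup X n M ⁻¹' S₂)
      = P (tup X 0 n ⁻¹' S₁) * P (tup X n M ⁻¹' S₂) := by
  have hsplit : tup X 0 n ⁻¹' S₁ ∩ tup X n M ⁻¹' S₂
      = tup X 0 (n + M) ⁻¹' {v | (fun i : Fin n => v (Fin.castAdd M i)) ∈ S₁ ∧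
          (fun i : Fin M => v (Fin.natAdd n i)) ∈ S₂} := by
    ext ω
    have h1 : (fun i : Fin n => tup X 0 (n+M) ω (Fin.castAdd M i)) = tup X 0 n ω := by
      funext i; simp [tup]
    have h2 : (fun i : Fin M => tup X 0 (n+M) ω (Fin.natAdd n i)) = tup X n M ω := by
      funext i; simp [tup]
    simp only [Set.mem_inter_iff, Set.mem_preimage, Set.mem_setOf_eq, h1, h2]
  rw [hsplit, meas_tup hX, meas_tup hX, meas_tup hX]
  rw [← Equiv.tsum_eq (appendSetEquiv S₁ S₂)]
  rw [ENNReal.tsum_prod']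
  have key : ∀ (p : S₁ × S₂),
      (∏ i : Fin (n+M), stepMeasure d {((appendSetEquiv S₁ S₂ p : _) : Fin (n+M) → Zd d) i})
      = (∏ i : Fin n, stepMeasure d {(p.1 : Fin n → Zd d) i}) *
        (∏ i : Fin M, stepMeasure d {(p.2 : Fin M → Zd d) i}) := by
    intro p
    rw [appendSetEquiv_coe, Fin.prod_univ_add]
    congr 1 <;> exact Finset.prod_congr rfl fun i _ => by
      simp [Fin.append_left, Fin.append_right]
  calc ∑' (a : S₁) (b : S₂),
        ∏ i : Fin (n+M), stepMeasure d {((appendSetEquiv S₁ S₂ (a, b) : _) : Fin (n+M) → Zd d) i}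
      = ∑' (a : S₁) (b : S₂), (∏ i : Fin n, stepMeasure d {(a : Fin n → Zd d) i}) *
        (∏ i : Fin M, stepMeasure d {(b : Fin M → Zd d) i}) :=
        tsum_congr fun a => tsum_congr fun b => key (a, b)
    _ = ∑' (a : S₁), (∏ i : Fin n, stepMeasure d {(a : Fin n → Zd d) i}) *
        (∑' (b : S₂), ∏ i : Fin M, stepMeasure d {(b : Fin M → Zd d) i}) :=
        tsum_congr fun a => ENNReal.tsum_mul_left
    _ = _ := ENNReal.tsum_mul_right

/-- Position of the walk at time `n` (started at the origin). -/
def walk {d : ℕ} {Ω : Type} (X : ℕ → Ω → Zd d) (n : ℕ) (ω : Ω) : Zd d :=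
  ∑ i ∈ Finset.range n, X i ω

/-- The event that the walk started at `x` never hits `A` at a positive time,
i.e. `τ_A = ∞`. -/
def avoids {d : ℕ} {Ω : Type} (X : ℕ → Ω → Zd d) (x : Zd d)
    (A : Finset (Zd d)) (ω : Ω) : Prop :=
  ∀ n, 1 ≤ n → x + walk X n ω ∉ A

variable (X) in
/-- The walk restarted at time `off` from `z` avoids `A` up to `M` more steps. -/
def Dset (off : ℕ) (z : Zd d) (A : Finset (Zd d)) (M : ℕ) : Set Ω :=
  {ω | ∀ m, 1 ≤ m → m ≤ M → z + ∑ i ∈ Finset.range m, X (off + i) ω ∉ A}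

variable (X) in
def AvoidSet (off : ℕ) (z : Zd d) (A : Finset (Zd d)) : Set Ω :=
  {ω | ∀ m, 1 ≤ m → z + ∑ i ∈ Finset.range m, X (off + i) ω ∉ A}

def SM (z : Zd d) (A : Finset (Zd d)) (M : ℕ) : Set (Fin M → Zd d) :=
  {v | ∀ m, 1 ≤ m → m ≤ M →
    z + ∑ i ∈ Finset.range m, (if h : i < M then v ⟨i, h⟩ else 0) ∉ A}

omit [MeasurableSpace Ω] in
lemma Dset_eq (off : ℕ) (z : Zd d) (A : Finset (Zd d)) (M : ℕ) :
    Dset X off z A M = tup X off M ⁻¹' SM z A M := by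
  ext ω
  simp only [Dset, SM, Set.mem_preimage, Set.mem_setOf_eq]
  have : ∀ m, m ≤ M →
      (∑ i ∈ Finset.range m, (if h : i < M then tup X off M ω ⟨i, h⟩ else 0))
      = ∑ i ∈ Finset.range m, X (off + i) ω := by
    intro m hm
    refine Finset.sum_congr rfl fun i hi => ?_
    rw [dif_pos (lt_of_lt_of_le (Finset.mem_range.1 hi) hm)]
    rfl
  constructor
  · intro h m h1 hM; rw [this m hM]; exact h m h1 hM
  · intro h m h1 hM; have h2 := h m h1 hM; rwa [this m hM] at h2

omit [MeasurableSpace Ω] in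
lemma AvoidSet_eq_iInter (off : ℕ) (z : Zd d) (A : Finset (Zd d)) :
    AvoidSet X off z A = ⋂ M, Dset X off z A M := by
  ext ω
  simp only [AvoidSet, Dset, Set.mem_iInter, Set.mem_setOf_eq]
  exact ⟨fun h M m h1 _ => h m h1, fun h m h1 => h m m h1 le_rfl⟩

omit [MeasurableSpace Ω] in
lemma Dset_antitone (off : ℕ) (z : Zd d) (A : Finset (Zd d)) :
    Antitone (Dset X off z A) :=
  fun M N hMN ω hω m h1 hm => hω m h1 (hm.trans hMN)

lemma Dset_measurable (hX : IsSRW d P X) (off : ℕ) (z : Zd d) (A : Finset (Zd d)) (M : ℕ) :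
    MeasurableSet (Dset X off z A M) := by
  rw [Dset_eq]
  exact tup_measurable hX off M (Set.to_countable _).measurableSet

lemma AvoidSet_measurable (hX : IsSRW d P X) (off : ℕ) (z : Zd d) (A : Finset (Zd d)) :
    MeasurableSet (AvoidSet X off z A) := by
  rw [AvoidSet_eq_iInter]
  exact MeasurableSet.iInter fun M => Dset_measurable hX off z A M

omit [MeasurableSpace Ω] in
lemma hit_eq (x z : Zd d) (n : ℕ) :
    {ω : Ω | x + walk X n ω = z} = tup X 0 n ⁻¹' {v | x + ∑ i : Fin n, v i = z} := by
  ext ω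
  simp only [Set.mem_setOf_eq, Set.mem_preimage, walk]
  have hsum : (∑ i : Fin n, tup X 0 n ω i) = ∑ i ∈ Finset.range n, X i ω := by
    rw [← Fin.sum_univ_eq_sum_range (fun i => X i ω) n]
    exact Finset.sum_congr rfl fun i _ => by simp [tup]
  rw [hsum]

lemma hit_measurable (hX : IsSRW d P X) (x z : Zd d) (n : ℕ) :
    MeasurableSet {ω : Ω | x + walk X n ω = z} := by
  rw [hit_eq]
  exact tup_measurable hX 0 n (Set.to_countable _).measurableSet

lemma markov (hX : IsSRW d P X) (x z : Zd d) (n : ℕ) (A : Finset (Zd d)) :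
    P ({ω : Ω | x + walk X n ω = z} ∩ AvoidSet X n z A)
      = P {ω : Ω | x + walk X n ω = z} * P (AvoidSet X 0 z A) := by
  have hP : IsProbabilityMeasure P := hX.prob
  set B := {ω : Ω | x + walk X n ω = z} with hB
  have hBm : MeasurableSet B := hit_measurable hX x z n
  have hFm : ∀ M, NullMeasurableSet (B ∩ Dset X n z A M) P :=
    fun M => (hBm.inter (Dset_measurable hX n z A M)).nullMeasurableSet
  have hanti : Antitone (fun M => B ∩ Dset X n z A M) :=
    fun M N h => Set.inter_subset_inter_right _ (Dset_antitone n z A h)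
  have hInter : (⋂ M, B ∩ Dset X n z A M) = B ∩ AvoidSet X n z A := by
    rw [AvoidSet_eq_iInter, Set.inter_iInter]
  have h1 : Filter.Tendsto (fun M => P (B ∩ Dset X n z A M)) Filter.atTop
      (nhds (P (B ∩ AvoidSet X n z A))) := by
    have := tendsto_measure_iInter_atTop (μ := P) hFm hanti ⟨0, measure_ne_top P _⟩
    rwa [hInter] at this
  have heq : ∀ M, P (B ∩ Dset X n z A M) = P B * P (Dset X 0 z A M) := by
    intro M
    rw [hB, hit_eq, Dset_eq, meas_tup_inter hX, meas_tup_shift hX n M, ← Dset_eq, ← hit_eq]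
  have h2' : Filter.Tendsto (fun M => P (Dset X 0 z A M)) Filter.atTop
      (nhds (P (AvoidSet X 0 z A))) := by
    have := tendsto_measure_iInter_atTop (μ := P)
      (fun M => (Dset_measurable hX 0 z A M).nullMeasurableSet)
      (Dset_antitone 0 z A) ⟨0, measure_ne_top P _⟩
    rwa [← AvoidSet_eq_iInter] at this
  have h2 : Filter.Tendsto (fun M => P (B ∩ Dset X n z A M)) Filter.atTop
      (nhds (P B * P (AvoidSet X 0 z A))) := by
    simp only [heq]
    exact ENNReal.Tendsto.const_mul h2' (Or.inr (measure_ne_top P _))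
  exact tendsto_nhds_unique h1 h2

omit [MeasurableSpace Ω] in
lemma walk_add (n m : ℕ) (ω : Ω) :
    walk X (n + m) ω = walk X n ω + ∑ i ∈ Finset.range m, X (n + i) ω :=
  Finset.sum_range_add (fun i => X i ω) n m

omit [MeasurableSpace Ω] in
lemma L_eq (x z : Zd d) (n : ℕ) (A : Finset (Zd d)) :
    {ω : Ω | x + walk X n ω = z} ∩ AvoidSet X n z A
      = {ω : Ω | x + walk X n ω = z ∧ ∀ m, 1 ≤ m → x + walk X (n + m) ω ∉ A} := by
  ext ω
  simp only [Set.mem_inter_iff, Set.mem_setOf_eq, AvoidSet]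
  constructor
  · rintro ⟨h1, h2⟩
    refine ⟨h1, fun m hm => ?_⟩
    rw [walk_add, ← add_assoc, h1]
    exact h2 m hm
  · rintro ⟨h1, h2⟩
    refine ⟨h1, fun m hm => ?_⟩
    have := h2 m hm
    rwa [walk_add, ← add_assoc, h1] at this

lemma lastExit (hX : IsSRW d P X) (x : Zd d) (A : Finset (Zd d)) :
    ∑ z ∈ A, (∑' n : ℕ, P {ω : Ω | x + walk X n ω = z}) * P (AvoidSet X 0 z A) ≤ 1 := by
  have hP : IsProbabilityMeasure P := hX.prob
  -- rewrite each summand via Markov property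
  have hterm : ∀ z ∈ A, (∑' n : ℕ, P {ω : Ω | x + walk X n ω = z}) * P (AvoidSet X 0 z A)
      = ∑' n : ℕ, P ({ω : Ω | x + walk X n ω = z} ∩ AvoidSet X n z A) := by
    intro z _
    rw [← ENNReal.tsum_mul_right]
    exact tsum_congr fun n => (markov hX x z n A).symm
  rw [Finset.sum_congr rfl hterm]
  -- turn into a tsum over pairs
  have hsub : ∑ z ∈ A, ∑' n : ℕ, P ({ω : Ω | x + walk X n ω = z} ∩ AvoidSet X n z A)
      = ∑' p : {z : Zd d // z ∈ A} × ℕ,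
          P ({ω : Ω | x + walk X p.2 ω = (p.1 : Zd d)} ∩ AvoidSet X p.2 (p.1 : Zd d) A) := by
    rw [ENNReal.tsum_prod']
    rw [← Finset.tsum_subtype A
      (fun z => ∑' n : ℕ, P ({ω : Ω | x + walk X n ω = z} ∩ AvoidSet X n z A))]
  rw [hsub]
  -- disjointness
  set L : {z : Zd d // z ∈ A} × ℕ → Set Ω := fun p =>
    {ω : Ω | x + walk X p.2 ω = (p.1 : Zd d)} ∩ AvoidSet X p.2 (p.1 : Zd d) A with hL
  have hLm : ∀ p, MeasurableSet (L p) := fun p =>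
    (hit_measurable hX x p.1 p.2).inter (AvoidSet_measurable hX p.2 p.1 A)
  have hdisj : Pairwise (Function.onFun Disjoint L) := by
    intro p q hpq
    rw [Function.onFun, Set.disjoint_left]
    intro ω hp hq
    have hp' : ω ∈ {ω : Ω | x + walk X p.2 ω = (p.1 : Zd d) ∧
        ∀ m, 1 ≤ m → x + walk X (p.2 + m) ω ∉ A} := by
      rw [← L_eq]; exact hp
    have hq' : ω ∈ {ω : Ω | x + walk X q.2 ω = (q.1 : Zd d) ∧
        ∀ m, 1 ≤ m → x + walk X (q.2 + m) ω ∉ A} := by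
      rw [← L_eq]; exact hq
    simp only [Set.mem_setOf_eq] at hp' hq'
    rcases lt_trichotomy p.2 q.2 with h | h | h
    · have h1 := hp'.2 (q.2 - p.2) (by omega)
      rw [show p.2 + (q.2 - p.2) = q.2 by omega, hq'.1] at h1
      exact h1 q.1.2
    · apply hpq
      have hz : (p.1 : Zd d) = q.1 := by rw [← hp'.1, h, hq'.1]
      exact Prod.ext (Subtype.ext hz) h
    · have h1 := hq'.2 (p.2 - q.2) (by omega)
      rw [show q.2 + (p.2 - q.2) = p.2 by omega, hp'.1] at h1
      exact h1 p.1.2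
  calc ∑' p, P (L p) = P (⋃ p, L p) := (measure_iUnion hdisj hLm).symm
    _ ≤ 1 := prob_le_one


/-- Green's function `G(x,y) = ∑_{n ≥ 0} P^x(S_n = y)` of the walk. -/
def green {d : ℕ} {Ω : Type} [MeasurableSpace Ω] (P : Measure Ω)
    (X : ℕ → Ω → Zd d) (x y : Zd d) : ℝ :=
  ∑' n : ℕ, (P {ω | x + walk X n ω = y}).toReal

omit [MeasurableSpace Ω] in
lemma avoids_set_eq (z : Zd d) (B : Finset (Zd d)) :
    {ω : Ω | avoids X z B ω} = AvoidSet X 0 z B := by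
  ext ω
  simp only [avoids, AvoidSet, Set.mem_setOf_eq, walk, Nat.zero_add]

lemma green_eq_toReal (hX : IsSRW d P X) (y z : Zd d) :
    green P X y z = (∑' n : ℕ, P {ω : Ω | y + walk X n ω = z}).toReal := by
  have := hX.prob
  rw [green, ← ENNReal.tsum_toReal_eq (fun n => measure_ne_top P _)]

omit [MeasurableSpace Ω] in
lemma diag_indep (y : Zd d) (n : ℕ) :
    {ω : Ω | y + walk X n ω = y} = {ω : Ω | walk X n ω = (0 : Zd d)} := by
  ext ω
  simp [add_eq_left]

/-- The (Newtonian) capacity `Cap(A) = ∑_{x ∈ A} P^x(τ_A = ∞)`. -/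
def cap {d : ℕ} {Ω : Type} [MeasurableSpace Ω] (P : Measure Ω)
    (X : ℕ → Ω → Zd d) (A : Finset (Zd d)) : ℝ :=
  ∑ x ∈ A, (P {ω | avoids X x A ω}).toReal

/-- Lemma 2.3 (mat2): for lists `Z₁ = {x_1,…,x_{j₁}}`, `Z₂ = {x_{j₁+1},…,x_{j₁+j₂}}`
of points (not necessarily distinct) in `ℤ^d`, `d ≥ 3`,
`Cap(Z₁ ∪ Z₂) ≤ Cap(Z₂) + (j₁+j₂)/min_{x ∈ Z₁ \ Z₂} ∑_i G(x_i, x)`. -/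
theorem capacity_union_green_bound {d : ℕ} (hd : 3 ≤ d) {Ω : Type} [MeasurableSpace Ω]
    (P : Measure Ω) (X : ℕ → Ω → Zd d) (hX : IsSRW d P X)
    (j₁ j₂ : ℕ) (x : Fin (j₁ + j₂) → Zd d) (Z₁ Z₂ : Finset (Zd d))
    (hZ₁ : Z₁ = (Finset.univ.filter fun i : Fin (j₁ + j₂) => (i : ℕ) < j₁).image x)
    (hZ₂ : Z₂ = (Finset.univ.filter fun i : Fin (j₁ + j₂) => j₁ ≤ (i : ℕ)).image x)
    (hne : (Z₁ \ Z₂).Nonempty) :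
    cap P X (Z₁ ∪ Z₂) ≤ cap P X Z₂ +
      ((j₁ : ℝ) + j₂) / ((Z₁ \ Z₂).inf' hne fun z => ∑ i, green P X (x i) z) := by
  classical
  have hP : IsProbabilityMeasure P := hX.prob
  set A := Z₁ ∪ Z₂ with hA
  set m := (Z₁ \ Z₂).inf' hne fun z => ∑ i, green P X (x i) z with hmdef
  have hsubset : Z₁ \ Z₂ ⊆ A := Finset.sdiff_subset.trans Finset.subset_union_left
  set es : Zd d → ENNReal := fun z => P (AvoidSet X 0 z A) with hes
  set Gt : Fin (j₁ + j₂) → Zd d → ENNReal :=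
    fun i z => ∑' n : ℕ, P {ω : Ω | x i + walk X n ω = z} with hGt
  have hAsplit : A = Z₂ ∪ (Z₁ \ Z₂) := by
    ext w; simp only [hA, Finset.mem_union, Finset.mem_sdiff]; tauto
  have hcapA : cap P X A = (∑ z ∈ Z₂, (P {ω | avoids X z A ω}).toReal)
      + ∑ z ∈ Z₁ \ Z₂, (P {ω | avoids X z A ω}).toReal := by
    rw [cap, ← Finset.sum_union Finset.disjoint_sdiff, ← hAsplit]
  have hcap2 : ∑ z ∈ Z₂, (P {ω | avoids X z A ω}).toReal ≤ cap P X Z₂ := by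
    rw [cap]
    refine Finset.sum_le_sum fun z hz => ?_
    refine ENNReal.toReal_mono (measure_ne_top P _) (measure_mono ?_)
    intro ω hω n hn hmem
    exact hω n hn (Finset.mem_union_right _ hmem)
  have hest : ∑ z ∈ Z₁ \ Z₂, (∑ i, Gt i z) * es z ≤ ((j₁ + j₂ : ℕ) : ENNReal) := by
    have h1 : ∀ i : Fin (j₁ + j₂), ∑ z ∈ Z₁ \ Z₂, Gt i z * es z ≤ 1 := fun i =>
      le_trans (Finset.sum_le_sum_of_subset hsubset) (lastExit hX (x i) A)
    calc ∑ z ∈ Z₁ \ Z₂, (∑ i, Gt i z) * es z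
        = ∑ z ∈ Z₁ \ Z₂, ∑ i, Gt i z * es z :=
          Finset.sum_congr rfl fun z _ => Finset.sum_mul _ _ _
      _ = ∑ i, ∑ z ∈ Z₁ \ Z₂, Gt i z * es z := Finset.sum_comm
      _ ≤ ∑ _i : Fin (j₁ + j₂), (1 : ENNReal) := Finset.sum_le_sum fun i _ => h1 i
      _ = ((j₁ + j₂ : ℕ) : ENNReal) := by simp
  have hsingle : ∀ z ∈ Z₁ \ Z₂, ∀ y : Zd d,
      (∑' n : ℕ, P {ω : Ω | y + walk X n ω = z}) * es z ≤ 1 := by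
    intro z hz y
    refine le_trans ?_ (lastExit hX y A)
    exact Finset.single_le_sum
      (f := fun w => (∑' n : ℕ, P {ω : Ω | y + walk X n ω = w}) * es w)
      (fun _ _ => zero_le) (hsubset hz)
  have hmemZ₁ : ∀ z ∈ Z₁ \ Z₂, ∃ i : Fin (j₁ + j₂), x i = z := by
    intro z hz
    have h1 := (Finset.mem_sdiff.1 hz).1
    rw [hZ₁] at h1
    obtain ⟨i, -, hi⟩ := Finset.mem_image.1 h1
    exact ⟨i, hi⟩
  have hgreen : ∀ (i : Fin (j₁ + j₂)) (z : Zd d), green P X (x i) z = (Gt i z).toReal :=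
    fun i z => green_eq_toReal hX (x i) z
  have hgreen_nonneg : ∀ y z : Zd d, 0 ≤ green P X y z :=
    fun y z => tsum_nonneg fun n => ENNReal.toReal_nonneg
  have hm_nonneg : 0 ≤ m :=
    Finset.le_inf' hne _ fun z _ => Finset.sum_nonneg fun i _ => hgreen_nonneg _ _
  rcases eq_or_lt_of_le hm_nonneg with hm0 | hmpos
  · -- degenerate case: the min is 0, so the Green's function diverges and all escape
    -- probabilities vanish
    obtain ⟨z₀, hz₀, hz₀val⟩ :=
      Finset.exists_mem_eq_inf' hne (fun z => ∑ i, green P X (x i) z)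
    have hsum0 : ∑ i, green P X (x i) z₀ = 0 := by rw [← hz₀val, ← hmdef, ← hm0]
    have hgz : ∀ i : Fin (j₁ + j₂), green P X (x i) z₀ = 0 := by
      have h2 := (Finset.sum_eq_zero_iff_of_nonneg fun i _ => hgreen_nonneg (x i) z₀).1 hsum0
      exact fun i => h2 i (Finset.mem_univ i)
    obtain ⟨i₀, hi₀⟩ := hmemZ₁ z₀ hz₀
    have h1le : (1 : ENNReal) ≤ Gt i₀ z₀ := by
      have huniv : {ω : Ω | x i₀ + walk X 0 ω = z₀} = Set.univ := by
        ext ω; simp [walk, hi₀]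
      rw [hGt]
      calc (1 : ENNReal) = P {ω : Ω | x i₀ + walk X 0 ω = z₀} := by
            rw [huniv, measure_univ]
        _ ≤ _ := ENNReal.le_tsum 0
    have htop : Gt i₀ z₀ = ∞ := by
      have hz : (Gt i₀ z₀).toReal = 0 := by rw [← hgreen]; exact hgz i₀
      rcases (ENNReal.toReal_eq_zero_iff _).1 hz with h | h
      · exfalso; rw [h] at h1le; simpa using h1le
      · exact h
    have hC : (∑' n : ℕ, P {ω : Ω | walk X n ω = (0 : Zd d)}) = ∞ := by
      rw [← htop, hGt]
      exact tsum_congr fun n => by rw [← hi₀, diag_indep]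
    have hes0 : ∀ z ∈ Z₁ \ Z₂, es z = 0 := by
      intro z hz
      by_contra h
      have h2 := hsingle z hz z
      have h3 : (∑' n : ℕ, P {ω : Ω | z + walk X n ω = z}) = ∞ := by
        rw [show (∑' n : ℕ, P {ω : Ω | z + walk X n ω = z})
          = ∑' n : ℕ, P {ω : Ω | walk X n ω = (0 : Zd d)} from
            tsum_congr fun n => by rw [diag_indep], hC]
      rw [h3, ENNReal.top_mul h] at h2
      simp at h2
    have hzero : ∑ z ∈ Z₁ \ Z₂, (P {ω | avoids X z A ω}).toReal = 0 := by
      refine Finset.sum_eq_zero fun z hz => ?_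
      have h4 : P {ω | avoids X z A ω} = 0 := by
        rw [avoids_set_eq]; exact hes0 z hz
      rw [h4]; simp
    rw [hcapA, hzero, ← hm0, div_zero, add_zero]
    linarith [hcap2]
  · rw [hcapA]
    have key : ∑ z ∈ Z₁ \ Z₂, (P {ω | avoids X z A ω}).toReal ≤ ((j₁ : ℝ) + j₂) / m := by
      rw [le_div_iff₀ hmpos]
      have hstep1 : ∀ z ∈ Z₁ \ Z₂, (P {ω | avoids X z A ω}).toReal * m
          ≤ ((∑ i, Gt i z) * es z).toReal := by
        intro z hz
        by_cases htop : ∃ i, Gt i z = ∞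
        · obtain ⟨i, hi⟩ := htop
          have h2 := hsingle z hz (x i)
          rw [show (∑' n : ℕ, P {ω : Ω | x i + walk X n ω = z}) = Gt i z from rfl, hi] at h2
          have hes0 : es z = 0 := by
            by_contra h
            rw [ENNReal.top_mul h] at h2; simp at h2
          have h5 : P {ω | avoids X z A ω} = 0 := by rw [avoids_set_eq]; exact hes0
          rw [h5]
          simp only [ENNReal.toReal_zero, zero_mul]
          exact ENNReal.toReal_nonneg
        · push_neg at htop
          have hm_le : m ≤ ∑ i, green P X (x i) z := by
            rw [hmdef]; exact Finset.inf'_le _ hz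
          have hgsum : ∑ i, green P X (x i) z = (∑ i, Gt i z).toReal := by
            rw [ENNReal.toReal_sum (fun i _ => htop i)]
            exact Finset.sum_congr rfl fun i _ => hgreen i z
          have heq : (P {ω | avoids X z A ω}).toReal = (es z).toReal := by
            rw [avoids_set_eq]
          rw [heq]
          calc (es z).toReal * m ≤ (es z).toReal * (∑ i, Gt i z).toReal := by
                refine mul_le_mul_of_nonneg_left ?_ ENNReal.toReal_nonneg
                rw [← hgsum]; exact hm_le
            _ = ((∑ i, Gt i z) * es z).toReal := by rw [ENNReal.toReal_mul]; ring
      have hlt : ∑ z ∈ Z₁ \ Z₂, (∑ i, Gt i z) * es z < ∞ :=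
        lt_of_le_of_lt hest (by simp)
      have hfin_t : ∀ z ∈ Z₁ \ Z₂, (∑ i, Gt i z) * es z ≠ ∞ :=
        fun z hz => (ENNReal.sum_lt_top.1 hlt z hz).ne
      calc (∑ z ∈ Z₁ \ Z₂, (P {ω | avoids X z A ω}).toReal) * m
          = ∑ z ∈ Z₁ \ Z₂, (P {ω | avoids X z A ω}).toReal * m := Finset.sum_mul _ _ _
        _ ≤ ∑ z ∈ Z₁ \ Z₂, ((∑ i, Gt i z) * es z).toReal := Finset.sum_le_sum hstep1
        _ = (∑ z ∈ Z₁ \ Z₂, (∑ i, Gt i z) * es z).toReal := (ENNReal.toReal_sum hfin_t).symm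
        _ ≤ (((j₁ + j₂ : ℕ)) : ENNReal).toReal := ENNReal.toReal_mono (by simp) hest
        _ = (j₁ : ℝ) + j₂ := by rw [ENNReal.toReal_natCast]; push_cast; ring
    linarith [hcap2, key]

end
end

section
/- For a standard 4-dimensional Brownian motion (β_t), there is a constant C < ∞ such that for all t > 0 and x, y ∈ R^4: E[|β_t − x|^{-1} |β_t − y|^{-1}] ≤ C t^{-1/2} (|x| ∨ |y|)^{-1} ≤ 2C t^{-1/2} |y − x|^{-1}. -/
open MeasureTheory ProbabilityTheory
open scoped NNReal ENNReal

noncomputable section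

/-- Euclidean norm on `Fin d → ℝ`. -/
def nrm {d : ℕ} (x : Fin d → ℝ) : ℝ := Real.sqrt (∑ i, (x i) ^ 2)

/-- The law of a standard `d`-dimensional Brownian motion at time `t`:
`d` independent centered Gaussians of variance `t`. -/
def gaussPi (d : ℕ) (t : ℝ≥0) : Measure (Fin d → ℝ) :=
  Measure.pi fun _ => gaussianReal 0 t



section Aux
open Real Set

instance (d : ℕ) (t : ℝ≥0) : IsProbabilityMeasure (gaussPi d t) :=
  show IsProbabilityMeasure (Measure.pi _) from inferInstance

lemma lintegral_pi_prod : ∀ (n : ℕ) (μ : Measure ℝ) [SigmaFinite μ] (f : Fin n → ℝ → ℝ≥0∞),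
    (∀ i, Measurable (f i)) →
    ∫⁻ z : Fin n → ℝ, ∏ i, f i (z i) ∂Measure.pi (fun _ => μ) = ∏ i, ∫⁻ x, f i x ∂μ := by
  intro n
  induction n with
  | zero => intro μ _ f hf; simp [Measure.pi_of_empty]
  | succ n ih =>
    intro μ _ f hf
    have hmp := (measurePreserving_piFinSuccAbove (fun _ : Fin (n+1) => μ) 0).symm
    rw [hmp.lintegral_map_equiv (fun z => ∏ i, f i (z i))]
    have hkey : ∀ p : ℝ × (Fin n → ℝ),
        (∏ i, f i (((MeasurableEquiv.piFinSuccAbove (fun _ => ℝ) 0).symm p) i))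
          = f 0 p.1 * ∏ j : Fin n, f j.succ (p.2 j) := by
      intro p
      simp [MeasurableEquiv.piFinSuccAbove, Fin.prod_univ_succ]
    simp_rw [hkey]
    have hm2 : Measurable fun p : ℝ × (Fin n → ℝ) => f 0 p.1 * ∏ j : Fin n, f j.succ (p.2 j) :=
      ((hf 0).comp measurable_fst).mul
        (Finset.measurable_prod Finset.univ fun j _ =>
          (hf j.succ).comp ((measurable_pi_apply j).comp measurable_snd))
    rw [lintegral_prod _ hm2.aemeasurable]
    simp only []
    have : ∀ x : ℝ, ∫⁻ y, f 0 x * ∏ j : Fin n, f j.succ (y j) ∂Measure.pi (fun _ => μ)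
        = f 0 x * ∫⁻ y, ∏ j : Fin n, f j.succ (y j) ∂Measure.pi (fun _ => μ) := fun x =>
      lintegral_const_mul _ (Finset.measurable_prod Finset.univ fun j _ =>
          (hf j.succ).comp (measurable_pi_apply j))
    simp_rw [this, ih μ (fun j => f j.succ) (fun j => hf j.succ),
      lintegral_mul_const _ (hf 0), Fin.prod_univ_succ]

lemma gauss1d (t : ℝ≥0) (ht : 0 < t) (s a : ℝ) (hs : 0 < s) :
    ∫⁻ z, ENNReal.ofReal (rexp (-(s * (z - a)^2))) ∂(gaussianReal 0 t)
      = ENNReal.ofReal (rexp (-(s * a^2 / (1 + 2*s*(t:ℝ)))) / Real.sqrt (1 + 2*s*(t:ℝ))) := by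
  have hT0 : 0 < (t:ℝ) := ht
  set T : ℝ := (t:ℝ) with hTdef
  set b : ℝ := s + 1/(2*T) with hbdef
  have hb : 0 < b := by positivity
  set c : ℝ := s * a / b with hcdef
  set d : ℝ := s * a^2 / (1 + 2*s*T) with hddef
  have h1p : 0 < 1 + 2*s*T := by positivity
  have h2tb : 2*T*b = 1 + 2*s*T := by rw [hbdef, mul_add, mul_one_div_cancel (by positivity)]; ring
  have hexp : ∀ z : ℝ, rexp (-(z-0)^2/(2*(t:ℝ)) + -(s*(z-a)^2))
      = rexp (-d) * rexp (-(b*(z-c)^2)) := by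
    intro z
    rw [← Real.exp_add]
    congr 1
    rw [hddef, hcdef, hbdef]
    field_simp
    ring
  have hpoint : ∀ z : ℝ, gaussianPDFReal 0 t z * rexp (-(s * (z - a)^2))
      = ((Real.sqrt (2*π*T))⁻¹ * rexp (-d)) * rexp (-(b*(z-c)^2)) := by
    intro z
    rw [gaussianPDFReal, mul_assoc, ← Real.exp_add, hexp z, ← mul_assoc]
  have hmeas : Measurable fun z : ℝ => ENNReal.ofReal (rexp (-(s * (z - a)^2))) := by
    measurability
  rw [gaussianReal_of_var_ne_zero 0 ht.ne',
    lintegral_withDensity_eq_lintegral_mul _ (measurable_gaussianPDF 0 t) hmeas]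
  have hrw : ∀ z : ℝ, (gaussianPDF 0 t * fun z => ENNReal.ofReal (rexp (-(s * (z - a)^2)))) z
      = ENNReal.ofReal (((Real.sqrt (2*π*T))⁻¹ * rexp (-d)) * rexp (-(b*(z-c)^2))) := by
    intro z
    simp only [Pi.mul_apply, gaussianPDF]
    rw [← ENNReal.ofReal_mul (gaussianPDFReal_nonneg 0 t z), hpoint z]
  simp_rw [hrw]
  have hint1 : Integrable fun z : ℝ => rexp (-(b * (z - c)^2)) := by
    have := ((measurePreserving_sub_right volume c).integrable_comp_emb
      (MeasurableEquiv.subRight c).measurableEmbedding).2 (integrable_exp_neg_mul_sq hb)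
    simpa only [Function.comp_def, neg_mul, MeasurableEquiv.subRight] using this
  rw [← ofReal_integral_eq_lintegral_ofReal (hint1.const_mul _)
    (Filter.Eventually.of_forall fun z => by positivity)]
  rw [integral_const_mul]
  have hval : ∫ z : ℝ, rexp (-(b*(z-c)^2)) = Real.sqrt (π / b) := by
    rw [← integral_gaussian b, ← integral_sub_right_eq_self (fun z => rexp (-b * z^2)) c]
    congr 1 with z
    ring_nf
  rw [hval]
  congr 1
  rw [div_eq_mul_inv, mul_comm ((Real.sqrt (2*π*T))⁻¹) (rexp (-d)), mul_assoc]
  congr 1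
  rw [← Real.sqrt_inv, ← Real.sqrt_inv, ← Real.sqrt_mul (by positivity)]
  congr 1
  rw [← h2tb]
  field_simp

lemma gauss4 (t : ℝ≥0) (ht : 0 < t) (s : ℝ) (hs : 0 < s) (x : Fin 4 → ℝ) :
    ∫⁻ z : Fin 4 → ℝ, ENNReal.ofReal (rexp (-(s * ∑ i, (z i - x i)^2))) ∂(gaussPi 4 t)
      = ENNReal.ofReal (rexp (-(s * (∑ i, (x i)^2) / (1 + 2*s*(t:ℝ)))) / (1 + 2*s*(t:ℝ))^2) := by
  have h1p : 0 < 1 + 2*s*(t:ℝ) := by positivity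
  have hprod : ∀ z : Fin 4 → ℝ, ENNReal.ofReal (rexp (-(s * ∑ i, (z i - x i)^2)))
      = ∏ i, ENNReal.ofReal (rexp (-(s * (z i - x i)^2))) := by
    intro z
    rw [← ENNReal.ofReal_prod_of_nonneg (fun i _ => (Real.exp_pos _).le), ← Real.exp_sum]
    congr 2
    rw [Finset.mul_sum, ← Finset.sum_neg_distrib]
  simp_rw [hprod]
  rw [show gaussPi 4 t = Measure.pi (fun _ => gaussianReal 0 t) from rfl,
    lintegral_pi_prod 4 _ (fun i => fun w => ENNReal.ofReal (rexp (-(s * (w - x i)^2))))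
      (fun i => by measurability)]
  have : ∀ i : Fin 4, ∫⁻ w, ENNReal.ofReal (rexp (-(s * (w - x i)^2))) ∂(gaussianReal 0 t)
      = ENNReal.ofReal (rexp (-(s * (x i)^2 / (1 + 2*s*(t:ℝ)))) / Real.sqrt (1 + 2*s*(t:ℝ))) :=
    fun i => gauss1d t ht s (x i) hs
  simp_rw [this]
  rw [← ENNReal.ofReal_prod_of_nonneg (fun i _ => by positivity)]
  congr 1
  rw [Finset.prod_div_distrib, ← Real.exp_sum, Finset.prod_const]
  congr 1
  · congr 1
    rw [Finset.sum_neg_distrib, ← Finset.sum_div, ← Finset.mul_sum]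
  · rw [Finset.card_univ, Fintype.card_fin]
    rw [show (Real.sqrt (1 + 2*s*(t:ℝ)))^4 = ((Real.sqrt (1 + 2*s*(t:ℝ)))^2)^2 by ring,
      Real.sq_sqrt h1p.le]

lemma lap (c : ℝ) (hc : 0 < c) :
    ∫⁻ s in Ioi (0:ℝ), ENNReal.ofReal (rexp (-(s*c))) = ENNReal.ofReal c⁻¹ := by
  have hrw : ∀ s : ℝ, -(s*c) = -c*s := fun s => by ring
  simp_rw [hrw]
  have hint : IntegrableOn (fun s : ℝ => rexp (-c*s)) (Ioi 0) := exp_neg_integrableOn_Ioi 0 hc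
  rw [← ofReal_integral_eq_lintegral_ofReal hint
    (Filter.Eventually.of_forall fun z => (Real.exp_pos _).le)]
  congr 1
  have hderiv : ∀ u ∈ Ici (0:ℝ), HasDerivAt (fun v : ℝ => -(rexp (-c*v)/c)) (rexp (-c*u)) u := by
    intro u _
    have h1 : HasDerivAt (fun v : ℝ => -c*v) (-c) u := by simpa using (hasDerivAt_id u).const_mul (-c)
    have h2 := (h1.exp.div_const c).neg
    have h3 : -(rexp (-c*u) * -c / c) = rexp (-c*u) := by
      rw [mul_neg, neg_div, neg_neg, mul_div_assoc, div_self hc.ne', mul_one]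
    rw [h3] at h2
    exact h2
  have htend : Filter.Tendsto (fun v : ℝ => -(rexp (-c*v)/c)) Filter.atTop (nhds 0) := by
    have : Filter.Tendsto (fun v : ℝ => -c*v) Filter.atTop Filter.atBot := by
      exact Filter.tendsto_id.const_mul_atTop_of_neg (neg_neg_iff_pos.mpr hc)
    have := (Real.tendsto_exp_atBot.comp this).div_const c |>.neg
    simpa using this
  rw [integral_Ioi_of_hasDerivAt_of_tendsto' hderiv hint htend]
  simp [hc.ne']

lemma I_eq (t : ℝ≥0) (ht : 0 < t) (x : Fin 4 → ℝ) :
    ∫⁻ z : Fin 4 → ℝ, (ENNReal.ofReal (∑ i, (z i - x i)^2))⁻¹ ∂(gaussPi 4 t)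
      = ∫⁻ s in Ioi (0:ℝ),
          ENNReal.ofReal (rexp (-(s * (∑ i, (x i)^2) / (1 + 2*s*(t:ℝ)))) / (1 + 2*s*(t:ℝ))^2) := by
  have hsing : gaussPi 4 t {x} = 0 := by
    have h1 : ({x} : Set (Fin 4 → ℝ)) = Set.univ.pi fun i => ({x i} : Set ℝ) :=
      (Set.univ_pi_singleton x).symm
    rw [gaussPi, h1, Measure.pi_pi]
    refine Finset.prod_eq_zero (Finset.mem_univ 0) ?_
    exact gaussianReal_absolutelyContinuous 0 ht.ne' (measure_singleton _)
  have hae : ∀ᵐ z ∂(gaussPi 4 t), z ≠ x := by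
    rw [Filter.eventually_iff, mem_ae_iff]
    convert hsing using 2
    ext z; simp
  have hpos : ∀ z : Fin 4 → ℝ, z ≠ x → 0 < ∑ i, (z i - x i)^2 := by
    intro z hz
    rcases (Finset.sum_nonneg fun i _ => sq_nonneg (z i - x i)).lt_or_eq with h | h
    · exact h
    · exfalso
      apply hz
      funext i
      have := (Finset.sum_eq_zero_iff_of_nonneg fun j _ => sq_nonneg (z j - x j)).1 h.symm i
        (Finset.mem_univ i)
      have : z i - x i = 0 := by nlinarith [this]
      linarith
  have hcong : ∀ᵐ z ∂(gaussPi 4 t), (ENNReal.ofReal (∑ i, (z i - x i)^2))⁻¹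
      = ∫⁻ s in Ioi (0:ℝ), ENNReal.ofReal (rexp (-(s * ∑ i, (z i - x i)^2))) := by
    filter_upwards [hae] with z hz
    rw [lap _ (hpos z hz), ENNReal.ofReal_inv_of_pos (hpos z hz)]
  rw [lintegral_congr_ae hcong]
  rw [lintegral_lintegral_swap]
  · refine setLIntegral_congr_fun measurableSet_Ioi (fun s hs => ?_)
    exact gauss4 t ht s hs x
  · apply Measurable.aemeasurable
    have hq : Continuous fun z : Fin 4 → ℝ => ∑ i, (z i - x i)^2 := by
      continuity
    have : Continuous fun p : (Fin 4 → ℝ) × ℝ => rexp (-(p.2 * ∑ i, (p.1 i - x i)^2)) := by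
      exact (((continuous_snd.mul (hq.comp continuous_fst)).neg).rexp)
    exact ENNReal.measurable_ofReal.comp this.measurable

lemma boundA (t : ℝ≥0) (ht : 0 < t) (x : Fin 4 → ℝ) :
    ∫⁻ z : Fin 4 → ℝ, (ENNReal.ofReal (∑ i, (z i - x i)^2))⁻¹ ∂(gaussPi 4 t)
      ≤ ENNReal.ofReal (1/(2*(t:ℝ))) := by
  have hT : 0 < (t:ℝ) := ht
  rw [I_eq t ht x]
  have hmono : ∀ s ∈ Ioi (0:ℝ),
      ENNReal.ofReal (rexp (-(s * (∑ i, (x i)^2) / (1 + 2*s*(t:ℝ)))) / (1 + 2*s*(t:ℝ))^2)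
        ≤ ENNReal.ofReal (((1 + 2*s*(t:ℝ))^2)⁻¹) := by
    intro s hs
    have hs0 : (0:ℝ) < s := hs
    have h1 : (0:ℝ) < (1 + 2*s*(t:ℝ))^2 := by positivity
    apply ENNReal.ofReal_le_ofReal
    rw [div_eq_mul_inv]
    have : rexp (-(s * (∑ i, (x i)^2) / (1 + 2*s*(t:ℝ)))) ≤ 1 := by
      apply Real.exp_le_one_iff.2
      have hX : 0 ≤ ∑ i, (x i)^2 := Finset.sum_nonneg fun i _ => sq_nonneg _
      have : 0 ≤ s * (∑ i, (x i)^2) / (1 + 2*s*(t:ℝ)) := by positivity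
      linarith
    nlinarith [inv_pos.2 h1]
  calc ∫⁻ s in Ioi (0:ℝ),
        ENNReal.ofReal (rexp (-(s * (∑ i, (x i)^2) / (1 + 2*s*(t:ℝ)))) / (1 + 2*s*(t:ℝ))^2)
      ≤ ∫⁻ s in Ioi (0:ℝ), ENNReal.ofReal (((1 + 2*s*(t:ℝ))^2)⁻¹) :=
        setLIntegral_mono' measurableSet_Ioi hmono
    _ = ENNReal.ofReal (1/(2*(t:ℝ))) := by
        have hderiv : ∀ u ∈ Ici (0:ℝ),
            HasDerivAt (fun v : ℝ => -(1/(2*(t:ℝ))) * (1 + 2*v*(t:ℝ))⁻¹)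
              (((1 + 2*u*(t:ℝ))^2)⁻¹) u := by
          intro u hu
          have hu0 : (0:ℝ) ≤ u := hu
          have hne : 1 + 2*u*(t:ℝ) ≠ 0 := by positivity
          have h1 : HasDerivAt (fun v : ℝ => 1 + 2*v*(t:ℝ)) (2*(t:ℝ)) u := by
            have : (fun v : ℝ => 1 + 2*v*(t:ℝ)) = fun v : ℝ => 1 + (2*(t:ℝ))*v := by
              funext v; ring
            rw [this]
            simpa using ((hasDerivAt_id u).const_mul (2*(t:ℝ))).const_add 1
          have h2 := (h1.inv hne).const_mul (-(1/(2*(t:ℝ))))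
          have ht2 : (2*(t:ℝ)) ≠ 0 := by positivity
          have h3 : -(1/(2*(t:ℝ))) * (-(2*(t:ℝ)) / (1 + 2*u*(t:ℝ))^2) = ((1 + 2*u*(t:ℝ))^2)⁻¹ := by
            rw [neg_div, mul_neg, neg_mul, neg_neg, one_div, ← mul_div_assoc, inv_mul_cancel₀ ht2, one_div]
          rw [h3] at h2
          exact h2
        have htend : Filter.Tendsto (fun v : ℝ => -(1/(2*(t:ℝ))) * (1 + 2*v*(t:ℝ))⁻¹)
            Filter.atTop (nhds 0) := by
          have h1 : Filter.Tendsto (fun v : ℝ => 1 + 2*v*(t:ℝ)) Filter.atTop Filter.atTop := by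
            apply Filter.tendsto_atTop_add_const_left
            have : (fun v : ℝ => 2*v*(t:ℝ)) = fun v : ℝ => (2*(t:ℝ))*v := by funext v; ring
            rw [this]
            exact (Filter.tendsto_id.const_mul_atTop (by positivity))
          have := (h1.inv_tendsto_atTop).const_mul (-(1/(2*(t:ℝ))))
          simpa using this
        have hnn : ∀ u ∈ Ioi (0:ℝ), 0 ≤ ((1 + 2*u*(t:ℝ))^2)⁻¹ := by
          intro u hu
          have : (0:ℝ) < u := hu
          positivity
        have hint := integrableOn_Ioi_deriv_of_nonneg' hderiv hnn htend
        rw [← ofReal_integral_eq_lintegral_ofReal hint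
          (Filter.Eventually.of_forall fun u => by positivity)]
        congr 1
        rw [integral_Ioi_of_hasDerivAt_of_nonneg' hderiv hnn htend]
        norm_num

lemma boundB (t : ℝ≥0) (ht : 0 < t) (x : Fin 4 → ℝ) (hX : 0 < ∑ i, (x i)^2) :
    ∫⁻ z : Fin 4 → ℝ, (ENNReal.ofReal (∑ i, (z i - x i)^2))⁻¹ ∂(gaussPi 4 t)
      ≤ ENNReal.ofReal (4/(∑ i, (x i)^2)) := by
  have hT : 0 < (t:ℝ) := ht
  set T : ℝ := (t:ℝ) with hTdef
  set X : ℝ := ∑ i, (x i)^2 with hXdef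
  rw [I_eq t ht x]
  have hr : (0:ℝ) < 1/(2*T) := by positivity
  have hsplit : Ioi (0:ℝ) = Ioc 0 (1/(2*T)) ∪ Ioi (1/(2*T)) := (Ioc_union_Ioi_eq_Ioi hr.le).symm
  rw [hsplit, lintegral_union measurableSet_Ioi Ioc_disjoint_Ioi_same]
  have piece1 : ∫⁻ s in Ioc (0:ℝ) (1/(2*T)),
      ENNReal.ofReal (rexp (-(s * X / (1 + 2*s*T))) / (1 + 2*s*T)^2)
        ≤ ENNReal.ofReal (2/X) := by
    have hpt : ∀ s ∈ Ioc (0:ℝ) (1/(2*T)),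
        ENNReal.ofReal (rexp (-(s * X / (1 + 2*s*T))) / (1 + 2*s*T)^2)
          ≤ ENNReal.ofReal (rexp (-(s * (X/2)))) := by
      intro s hs
      obtain ⟨hs0, hs1⟩ := hs
      have hden : (0:ℝ) < 1 + 2*s*T := by positivity
      have h2 : 1 + 2*s*T ≤ 2 := by
        rw [le_div_iff₀ (by positivity : (0:ℝ) < 2*T)] at hs1
        nlinarith
      apply ENNReal.ofReal_le_ofReal
      calc rexp (-(s * X / (1 + 2*s*T))) / (1 + 2*s*T)^2
          ≤ rexp (-(s * X / (1 + 2*s*T))) := by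
            apply div_le_self (Real.exp_pos _).le
            nlinarith [mul_pos (mul_pos (by norm_num : (0:ℝ) < 2) hs0) hT]
        _ ≤ rexp (-(s * (X/2))) := by
            apply Real.exp_le_exp.2
            have : s * (X/2) ≤ s * X / (1 + 2*s*T) := by
              rw [show s*(X/2) = s*X/2 by ring, div_le_div_iff₀ (by positivity) hden]
              nlinarith [mul_nonneg (mul_nonneg hs0.le hX.le) hT.le]
            linarith
    calc ∫⁻ s in Ioc (0:ℝ) (1/(2*T)),
          ENNReal.ofReal (rexp (-(s * X / (1 + 2*s*T))) / (1 + 2*s*T)^2)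
        ≤ ∫⁻ s in Ioc (0:ℝ) (1/(2*T)), ENNReal.ofReal (rexp (-(s * (X/2)))) :=
          setLIntegral_mono' measurableSet_Ioc hpt
      _ ≤ ∫⁻ s in Ioi (0:ℝ), ENNReal.ofReal (rexp (-(s * (X/2)))) :=
          lintegral_mono_set Ioc_subset_Ioi_self
      _ = ENNReal.ofReal ((X/2)⁻¹) := lap (X/2) (by positivity)
      _ = ENNReal.ofReal (2/X) := by rw [inv_div]
  have piece2 : ∫⁻ s in Ioi (1/(2*T)),
      ENNReal.ofReal (rexp (-(s * X / (1 + 2*s*T))) / (1 + 2*s*T)^2)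
        ≤ ENNReal.ofReal (2/X) := by
    have hpt : ∀ s ∈ Ioi (1/(2*T)),
        ENNReal.ofReal (rexp (-(s * X / (1 + 2*s*T))) / (1 + 2*s*T)^2)
          ≤ ENNReal.ofReal (rexp (-(X/(4*T))) / (4*T^2) * (s^2)⁻¹) := by
      intro s hs
      have hs' : 1/(2*T) < s := hs
      have hs0 : (0:ℝ) < s := lt_trans hr hs'
      have h1 : (1:ℝ) < 2*s*T := by
        rw [div_lt_iff₀ (by positivity)] at hs'
        nlinarith
      have hden : (0:ℝ) < 1 + 2*s*T := by positivity
      apply ENNReal.ofReal_le_ofReal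
      have hA : rexp (-(s * X / (1 + 2*s*T))) ≤ rexp (-(X/(4*T))) := by
        apply Real.exp_le_exp.2
        have : X/(4*T) ≤ s * X / (1 + 2*s*T) := by
          rw [div_le_div_iff₀ (by positivity) hden]
          nlinarith [mul_nonneg (by linarith : (0:ℝ) ≤ 2*s*T - 1) hX.le]
        linarith
      have hB : 4*T^2*s^2 ≤ (1 + 2*s*T)^2 := by nlinarith
      calc rexp (-(s * X / (1 + 2*s*T))) / (1 + 2*s*T)^2
          ≤ rexp (-(X/(4*T))) / (4*T^2*s^2) := by
            apply div_le_div₀ (Real.exp_pos _).le hA (by positivity) hB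
        _ = rexp (-(X/(4*T))) / (4*T^2) * (s^2)⁻¹ := by ring
    calc ∫⁻ s in Ioi (1/(2*T)),
          ENNReal.ofReal (rexp (-(s * X / (1 + 2*s*T))) / (1 + 2*s*T)^2)
        ≤ ∫⁻ s in Ioi (1/(2*T)), ENNReal.ofReal (rexp (-(X/(4*T))) / (4*T^2) * (s^2)⁻¹) :=
          setLIntegral_mono' measurableSet_Ioi hpt
      _ = ENNReal.ofReal (rexp (-(X/(4*T))) / (4*T^2)) * ∫⁻ s in Ioi (1/(2*T)),
            ENNReal.ofReal ((s^2)⁻¹) := by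
          simp_rw [ENNReal.ofReal_mul (by positivity : (0:ℝ) ≤ rexp (-(X/(4*T))) / (4*T^2))]
          rw [lintegral_const_mul]
          exact ENNReal.measurable_ofReal.comp ((measurable_id.pow_const 2).inv)
      _ ≤ ENNReal.ofReal (rexp (-(X/(4*T))) / (4*T^2)) * ENNReal.ofReal (2*T) := by
          gcongr
          have hderiv : ∀ u ∈ Ici (1/(2*T)), HasDerivAt (fun v : ℝ => -v⁻¹) ((u^2)⁻¹) u := by
            intro u hu
            have hu0 : (0:ℝ) < u := lt_of_lt_of_le hr hu
            have := (hasDerivAt_inv hu0.ne').neg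
            simp only [neg_neg] at this; exact this
          have hnn : ∀ u ∈ Ioi (1/(2*T)), 0 ≤ ((u:ℝ)^2)⁻¹ := fun u hu => by positivity
          have htend : Filter.Tendsto (fun v : ℝ => -v⁻¹) Filter.atTop (nhds 0) := by
            simpa using (tendsto_inv_atTop_zero : Filter.Tendsto (fun v:ℝ => v⁻¹) Filter.atTop (nhds 0)).neg
          have hint := integrableOn_Ioi_deriv_of_nonneg' hderiv hnn htend
          rw [← ofReal_integral_eq_lintegral_ofReal hint
            (Filter.Eventually.of_forall fun u => by positivity)]
          apply ENNReal.ofReal_le_ofReal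
          rw [integral_Ioi_of_hasDerivAt_of_nonneg' hderiv hnn htend]
          rw [one_div, inv_inv]
          simp
      _ ≤ ENNReal.ofReal (2/X) := by
          rw [← ENNReal.ofReal_mul (by positivity)]
          apply ENNReal.ofReal_le_ofReal
          have hv : (0:ℝ) < X/(4*T) := by positivity
          have hexp : rexp (-(X/(4*T))) ≤ 4*T/X := by
            rw [Real.exp_neg, show 4*T/X = (X/(4*T))⁻¹ by rw [inv_div]]
            exact inv_anti₀ hv (by nlinarith [Real.add_one_le_exp (X/(4*T))])
          have hexp' : rexp (-(X/(4*T))) * X ≤ 4*T := by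
            have h := mul_le_mul_of_nonneg_right hexp hX.le
            rwa [div_mul_cancel₀ _ hX.ne'] at h
          rw [div_mul_eq_mul_div, div_le_div_iff₀ (by positivity) (by positivity)]
          nlinarith [mul_le_mul_of_nonneg_left hexp' (by positivity : (0:ℝ) ≤ 2*T)]
  calc _ ≤ ENNReal.ofReal (2/X) + ENNReal.ofReal (2/X) := add_le_add piece1 piece2
    _ = ENNReal.ofReal (4/X) := by
        rw [← ENNReal.ofReal_add (by positivity) (by positivity)]
        congr 1
        ring

lemma nrm_nonneg {d : ℕ} (x : Fin d → ℝ) : 0 ≤ nrm x := Real.sqrt_nonneg _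

lemma nrm_sq {d : ℕ} (x : Fin d → ℝ) : (nrm x)^2 = ∑ i, (x i)^2 :=
  Real.sq_sqrt (Finset.sum_nonneg fun i _ => sq_nonneg _)

lemma nrm_eq_norm {d : ℕ} (x : Fin d → ℝ) :
    nrm x = ‖(EuclideanSpace.equiv (Fin d) ℝ).symm x‖ := by
  rw [EuclideanSpace.norm_eq]
  unfold nrm
  congr 1
  exact Finset.sum_congr rfl fun i _ => by simp [Real.norm_eq_abs, sq_abs]

lemma nrm_sub_le {d : ℕ} (x y : Fin d → ℝ) : nrm (y - x) ≤ nrm y + nrm x := by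
  rw [nrm_eq_norm, nrm_eq_norm, nrm_eq_norm, map_sub]
  exact norm_sub_le _ _

lemma nrm_inv_sq (x : Fin 4 → ℝ) (z : Fin 4 → ℝ) :
    ((ENNReal.ofReal (nrm (z - x)))⁻¹)^2 = (ENNReal.ofReal (∑ i, (z i - x i)^2))⁻¹ := by
  rw [← ENNReal.inv_pow, ← ENNReal.ofReal_pow (nrm_nonneg _), nrm_sq]
  simp [Pi.sub_apply]

lemma amgm (a b lam : ℝ≥0∞) (h0 : lam ≠ 0) (htop : lam ≠ ⊤) :
    a * b ≤ lam * a^2 + lam⁻¹ * b^2 := by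
  rcases le_total (lam * a) b with h | h
  · have ha : a ≤ lam⁻¹ * b := by
      have := mul_le_mul_right h lam⁻¹
      rwa [← mul_assoc, ENNReal.inv_mul_cancel h0 htop, one_mul] at this
    calc a * b ≤ (lam⁻¹ * b) * b := mul_le_mul_left ha b
      _ = lam⁻¹ * b^2 := by rw [mul_assoc, ← sq]
      _ ≤ _ := le_add_self
  · calc a * b ≤ a * (lam * a) := mul_le_mul_right h a
      _ = lam * a^2 := by rw [← mul_assoc, mul_comm a lam, mul_assoc, ← sq]
      _ ≤ _ := le_self_add

lemma meas_inv_nrm (x : Fin 4 → ℝ) :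
    Measurable fun z : Fin 4 → ℝ => (ENNReal.ofReal (nrm (z - x)))⁻¹ := by
  have hc : Continuous fun z : Fin 4 → ℝ => nrm (z - x) := by
    unfold nrm
    exact Real.continuous_sqrt.comp (by continuity)
  exact (ENNReal.measurable_ofReal.comp hc.measurable).inv

lemma key (t : ℝ≥0) (ht : 0 < t) (x y : Fin 4 → ℝ) (hxy : nrm x ≤ nrm y) :
    ∫⁻ z, (ENNReal.ofReal (nrm (z - x)))⁻¹ * (ENNReal.ofReal (nrm (z - y)))⁻¹ ∂(gaussPi 4 t)
      ≤ 5 * (ENNReal.ofReal (Real.sqrt t))⁻¹ * (ENNReal.ofReal (nrm y))⁻¹ := by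
  rcases eq_or_lt_of_le (nrm_nonneg y) with h0 | hy
  · rw [← h0]
    have h5 : (5:ℝ≥0∞) * (ENNReal.ofReal (Real.sqrt t))⁻¹ ≠ 0 :=
      mul_ne_zero (by norm_num) (ENNReal.inv_ne_zero.2 ENNReal.ofReal_ne_top)
    rw [ENNReal.ofReal_zero, ENNReal.inv_zero, ENNReal.mul_top h5]
    exact le_top
  · have hT : 0 < (t:ℝ) := ht
    have hu : 0 < Real.sqrt (t:ℝ) := Real.sqrt_pos.2 hT
    set lam : ℝ≥0∞ := ENNReal.ofReal (Real.sqrt (t:ℝ) / nrm y) with hlamdef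
    have hlam0 : lam ≠ 0 := (ENNReal.ofReal_pos.2 (by positivity)).ne'
    have hlamtop : lam ≠ ⊤ := ENNReal.ofReal_ne_top
    have hlaminv : lam⁻¹ = ENNReal.ofReal (nrm y / Real.sqrt (t:ℝ)) := by
      rw [hlamdef, ← ENNReal.ofReal_inv_of_pos (by positivity), inv_div]
    have hYpos : 0 < ∑ i, (y i)^2 := by rw [← nrm_sq]; positivity
    calc ∫⁻ z, (ENNReal.ofReal (nrm (z - x)))⁻¹ * (ENNReal.ofReal (nrm (z - y)))⁻¹ ∂(gaussPi 4 t)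
        ≤ ∫⁻ z, (lam * ((ENNReal.ofReal (nrm (z - x)))⁻¹)^2
            + lam⁻¹ * ((ENNReal.ofReal (nrm (z - y)))⁻¹)^2) ∂(gaussPi 4 t) :=
          lintegral_mono fun z => amgm _ _ _ hlam0 hlamtop
      _ = lam * ∫⁻ z, (ENNReal.ofReal (∑ i, (z i - x i)^2))⁻¹ ∂(gaussPi 4 t)
            + lam⁻¹ * ∫⁻ z, (ENNReal.ofReal (∑ i, (z i - y i)^2))⁻¹ ∂(gaussPi 4 t) := by
          have hmx : Measurable fun z : Fin 4 → ℝ =>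
              (ENNReal.ofReal (∑ i, (z i - x i)^2))⁻¹ := by
            apply Measurable.inv
            exact ENNReal.measurable_ofReal.comp (by continuity : Continuous
              fun z : Fin 4 → ℝ => ∑ i, (z i - x i)^2).measurable
          have hmy : Measurable fun z : Fin 4 → ℝ =>
              (ENNReal.ofReal (∑ i, (z i - y i)^2))⁻¹ := by
            apply Measurable.inv
            exact ENNReal.measurable_ofReal.comp (by continuity : Continuous
              fun z : Fin 4 → ℝ => ∑ i, (z i - y i)^2).measurable
          simp_rw [nrm_inv_sq]
          rw [lintegral_add_left (hmx.const_mul lam), lintegral_const_mul lam hmx,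
            lintegral_const_mul lam⁻¹ hmy]
      _ ≤ lam * ENNReal.ofReal (1/(2*(t:ℝ))) + lam⁻¹ * ENNReal.ofReal (4/(∑ i, (y i)^2)) :=
          add_le_add (mul_le_mul_right (boundA t ht x) _)
            (mul_le_mul_right (boundB t ht y hYpos) _)
      _ ≤ 5 * (ENNReal.ofReal (Real.sqrt t))⁻¹ * (ENNReal.ofReal (nrm y))⁻¹ := by
          rw [hlaminv, hlamdef, ← ENNReal.ofReal_mul (by positivity),
            ← ENNReal.ofReal_mul (by positivity), ← ENNReal.ofReal_add (by positivity)
              (by positivity)]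
          have h5 : (5:ℝ≥0∞) = ENNReal.ofReal 5 := by norm_num
          rw [h5, ← ENNReal.ofReal_inv_of_pos hu, ← ENNReal.ofReal_inv_of_pos hy,
            ← ENNReal.ofReal_mul (by norm_num), ← ENNReal.ofReal_mul (by positivity)]
          apply ENNReal.ofReal_le_ofReal
          have hsq : Real.sqrt (t:ℝ) * Real.sqrt (t:ℝ) = (t:ℝ) := Real.mul_self_sqrt hT.le
          rw [← nrm_sq y]
          set u := Real.sqrt (t:ℝ)
          set n := nrm y
          rw [show (t:ℝ) = u*u from hsq.symm]
          field_simp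
          norm_num

end Aux

/-- Cross bound (bine2): for standard 4-dimensional Brownian motion,
`E[|β_t − x|⁻¹|β_t − y|⁻¹] ≤ C t^{-1/2} (|x| ∨ |y|)⁻¹ ≤ 2C t^{-1/2} |y − x|⁻¹`. -/
theorem bm4_inverse_cross_moment :
    ∃ C : ℝ≥0∞, 0 < C ∧ C ≠ ⊤ ∧ ∀ (t : ℝ≥0) (x y : Fin 4 → ℝ), 0 < t →
      (∫⁻ z, (ENNReal.ofReal (nrm (z - x)))⁻¹ * (ENNReal.ofReal (nrm (z - y)))⁻¹
          ∂(gaussPi 4 t)) ≤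
          C * (ENNReal.ofReal (Real.sqrt t))⁻¹ * (ENNReal.ofReal (max (nrm x) (nrm y)))⁻¹ ∧
        C * (ENNReal.ofReal (Real.sqrt t))⁻¹ * (ENNReal.ofReal (max (nrm x) (nrm y)))⁻¹ ≤
          2 * C * (ENNReal.ofReal (Real.sqrt t))⁻¹ * (ENNReal.ofReal (nrm (y - x)))⁻¹ := by
  refine ⟨5, by norm_num, by norm_num, fun t x y ht => ⟨?_, ?_⟩⟩
  · rcases le_total (nrm x) (nrm y) with h | h
    · rw [max_eq_right h]
      exact key t ht x y h
    · rw [max_eq_left h]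
      have hswap : ∀ z : Fin 4 → ℝ,
          (ENNReal.ofReal (nrm (z - x)))⁻¹ * (ENNReal.ofReal (nrm (z - y)))⁻¹
            = (ENNReal.ofReal (nrm (z - y)))⁻¹ * (ENNReal.ofReal (nrm (z - x)))⁻¹ :=
        fun z => mul_comm _ _
      rw [lintegral_congr hswap]
      exact key t ht y x h
  · set M := max (nrm x) (nrm y) with hM
    have htri : nrm (y - x) ≤ 2 * M := by
      calc nrm (y - x) ≤ nrm y + nrm x := nrm_sub_le x y
        _ ≤ 2 * M := by
          have h1 := le_max_left (nrm x) (nrm y)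
          have h2 := le_max_right (nrm x) (nrm y)
          rw [hM]; linarith
    have h1 : (ENNReal.ofReal (2*M))⁻¹ ≤ (ENNReal.ofReal (nrm (y - x)))⁻¹ :=
      ENNReal.inv_le_inv' (ENNReal.ofReal_le_ofReal htri)
    have h2M : ENNReal.ofReal (2*M) = 2 * ENNReal.ofReal M := by
      rw [ENNReal.ofReal_mul (by norm_num)]
      norm_num
    calc (5:ℝ≥0∞) * (ENNReal.ofReal (Real.sqrt t))⁻¹ * (ENNReal.ofReal M)⁻¹
        = 2 * 5 * (ENNReal.ofReal (Real.sqrt t))⁻¹ * (ENNReal.ofReal (2*M))⁻¹ := by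
          rw [h2M, ENNReal.mul_inv (Or.inl (by norm_num)) (Or.inl (by norm_num))]
          rw [show (2:ℝ≥0∞) * 5 * (ENNReal.ofReal (Real.sqrt t))⁻¹ * (2⁻¹ * (ENNReal.ofReal M)⁻¹)
              = (2 * 2⁻¹) * (5 * (ENNReal.ofReal (Real.sqrt t))⁻¹ * (ENNReal.ofReal M)⁻¹) by ring]
          rw [ENNReal.mul_inv_cancel (by norm_num) (by norm_num), one_mul]
      _ ≤ 2 * 5 * (ENNReal.ofReal (Real.sqrt t))⁻¹ * (ENNReal.ofReal (nrm (y - x)))⁻¹ :=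
          mul_le_mul_right h1 _


end
end

section
/- Fix n ∈ N and define the positive linear operators on bounded functions on [0,1]: (Qf)(x) = ∫_0^{1−x} y^{-1/2} f(x+y) dy and (Q_n f)(x) = ∫_0^{1−x} (y)_n^{-1/2} f((x)_n + (y)_n) dy, where (y)_n := ⌈yn⌉/n. Then for every k ≥ 0, (Q_n^k 1)(x) ≤ (Q^k 1)(x) for all x ∈ [0,1]; in particular the Riemann sums J_{k,n} := n^{-k} ∑_{1 ≤ s_1 < ⋯ < s_k ≤ n} ∏_{i=1}^k (s_i/n − s_{i-1}/n)^{-1/2} (with s_0 = 0) satisfy J_{k,n} ≤ J_k for all k, n ∈ N. -/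
open MeasureTheory

noncomputable section

/-- The density `∏_{i=1}^k (θ_i − θ_{i−1})^{-1/2}` on the simplex, with `θ_0 := 0`. -/
def simplexDensity (k : ℕ) (θ : Fin k → ℝ) : ℝ :=
  ∏ i : Fin k,
    (θ i - if (i : ℕ) = 0 then 0
      else θ ⟨(i : ℕ) - 1, lt_of_le_of_lt (Nat.sub_le _ _) i.isLt⟩) ^ (-(1 : ℝ) / 2)

/-- The iterated simplex integral `J_k`, with `θ_0 = 0`. -/
def Jint (k : ℕ) : ℝ :=
  ∫ θ in {θ : Fin k → ℝ | StrictMono θ ∧ (∀ i, 0 < θ i) ∧ ∀ i, θ i ≤ 1},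
    simplexDensity k θ

/-- The discretization `(y)_n = ⌈yn⌉/n`. -/
def ceilPart (n : ℕ) (y : ℝ) : ℝ := ((⌈y * (n : ℝ)⌉ : ℤ) : ℝ) / n

/-- The positive operator `(Qf)(x) = ∫_0^{1−x} y^{-1/2} f(x+y) dy`. -/
def Qop (f : ℝ → ℝ) (x : ℝ) : ℝ :=
  ∫ y in Set.Ioc (0 : ℝ) (1 - x), y ^ (-(1 : ℝ) / 2) * f (x + y)

/-- The discretized operator `(Q_n f)(x) = ∫_0^{1−x} (y)_n^{-1/2} f((x)_n + (y)_n) dy`. -/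
def Qnop (n : ℕ) (f : ℝ → ℝ) (x : ℝ) : ℝ :=
  ∫ y in Set.Ioc (0 : ℝ) (1 - x),
    (ceilPart n y) ^ (-(1 : ℝ) / 2) * f (ceilPart n x + ceilPart n y)

/-- The Riemann sum
`J_{k,n} = n^{-k} ∑_{1 ≤ s₁ < ⋯ < s_k ≤ n} ∏_{i=1}^k (s_i/n − s_{i−1}/n)^{-1/2}`, `s_0 = 0`. -/
def Jsum (k n : ℕ) : ℝ :=
  ((n : ℝ) ^ k)⁻¹ *
    ∑ s ∈ (Fintype.piFinset fun _ : Fin k => Finset.Icc 1 n).filter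
        (fun s => ∀ i j : Fin k, i < j → s i < s j),
      ∏ i : Fin k,
        ((s i : ℝ) / n - if (i : ℕ) = 0 then 0
          else (s ⟨(i : ℕ) - 1, lt_of_le_of_lt (Nat.sub_le _ _) i.isLt⟩ : ℝ) / n) ^
          (-(1 : ℝ) / 2)

namespace QnQ


lemma le_ceilPart {n : ℕ} (hn : 0 < n) (y : ℝ) : y ≤ ceilPart n y := by
  rw [ceilPart, le_div_iff₀ (by exact_mod_cast hn)]
  exact Int.le_ceil _

lemma integrableOn_rpow (T : ℝ) :
    IntegrableOn (fun y : ℝ => y ^ (-(1:ℝ)/2)) (Set.Ioc 0 T) := by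
  rcases le_or_gt T 0 with h | h
  · rw [Set.Ioc_eq_empty (by simpa using h)]; exact integrableOn_empty
  · have := intervalIntegral.intervalIntegrable_rpow' (a := 0) (b := T)
      (r := -(1:ℝ)/2) (by norm_num)
    rw [intervalIntegrable_iff, Set.uIoc_of_le h.le] at this
    exact this

lemma measurable_shift_kernel (f : ℝ → ℝ) (hf : Measurable f) (x : ℝ) :
    Measurable fun y : ℝ => y ^ (-(1:ℝ)/2) * f (x + y) :=
  ((by measurability : Measurable fun y : ℝ => y ^ (-(1:ℝ)/2))).mul
    (hf.comp (measurable_const.add measurable_id))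

lemma integrableOn_antitone_kernel {f : ℝ → ℝ} (hf : Antitone f) (hf0 : ∀ z, 0 ≤ f z)
    (x T : ℝ) : IntegrableOn (fun y => y ^ (-(1:ℝ)/2) * f (x + y)) (Set.Ioc 0 T) := by
  apply Integrable.mono' ((integrableOn_rpow T).const_mul (f x))
  · exact ((measurable_shift_kernel f hf.measurable x)).aestronglyMeasurable
  · refine (ae_restrict_iff' measurableSet_Ioc).2 (Filter.Eventually.of_forall ?_)
    intro y hy
    have hy0 : (0:ℝ) < y := hy.1
    have h1 : 0 ≤ y ^ (-(1:ℝ)/2) := Real.rpow_nonneg hy0.le _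
    have h2 : 0 ≤ f (x + y) := hf0 _
    rw [Real.norm_eq_abs, abs_of_nonneg (mul_nonneg h1 h2)]
    calc y ^ (-(1:ℝ)/2) * f (x + y) ≤ y ^ (-(1:ℝ)/2) * f x :=
          mul_le_mul_of_nonneg_left (hf (by linarith)) h1
      _ = f x * y ^ (-(1:ℝ)/2) := mul_comm _ _

lemma Qop_nonneg {f : ℝ → ℝ} (hf0 : ∀ z, 0 ≤ f z) (x : ℝ) : 0 ≤ Qop f x :=
  setIntegral_nonneg measurableSet_Ioc fun y hy =>
    mul_nonneg (Real.rpow_nonneg hy.1.le _) (hf0 _)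

lemma Qnop_nonneg {n : ℕ} (hn : 0 < n) {f : ℝ → ℝ} (hf0 : ∀ z, 0 ≤ f z) (x : ℝ) :
    0 ≤ Qnop n f x :=
  setIntegral_nonneg measurableSet_Ioc fun y hy =>
    mul_nonneg (Real.rpow_nonneg ((hy.1.trans_le (le_ceilPart hn y)).le) _) (hf0 _)

lemma Qop_antitone {f : ℝ → ℝ} (hf : Antitone f) (hf0 : ∀ z, 0 ≤ f z) :
    Antitone (Qop f) := by
  intro x1 x2 h12
  have key : Qop f x2 ≤ ∫ y in Set.Ioc (0:ℝ) (1 - x2), y ^ (-(1:ℝ)/2) * f (x1 + y) := by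
    apply integral_mono_of_nonneg
    · refine (ae_restrict_iff' measurableSet_Ioc).2 (Filter.Eventually.of_forall ?_)
      intro y hy
      exact mul_nonneg (Real.rpow_nonneg hy.1.le _) (hf0 _)
    · exact integrableOn_antitone_kernel hf hf0 x1 (1 - x2)
    · refine (ae_restrict_iff' measurableSet_Ioc).2 (Filter.Eventually.of_forall ?_)
      intro y hy
      exact mul_le_mul_of_nonneg_left (hf (by linarith)) (Real.rpow_nonneg hy.1.le _)
  refine key.trans ?_
  apply setIntegral_mono_set (integrableOn_antitone_kernel hf hf0 x1 (1 - x1))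
  · refine (ae_restrict_iff' measurableSet_Ioc).2 (Filter.Eventually.of_forall ?_)
    intro y hy
    exact mul_nonneg (Real.rpow_nonneg hy.1.le _) (hf0 _)
  · exact (Set.Ioc_subset_Ioc_right (by linarith)).eventuallyLE

lemma part1 {n : ℕ} (hn : 0 < n) (k : ℕ) :
    Antitone (Qop^[k] (fun _ => 1)) ∧ (∀ z, 0 ≤ Qop^[k] (fun _ => 1) z) ∧
    (∀ z, 0 ≤ (Qnop n)^[k] (fun _ => 1) z) ∧
    (∀ x, 0 ≤ x → (Qnop n)^[k] (fun _ => 1) x ≤ Qop^[k] (fun _ => 1) x) := by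
  induction k with
  | zero =>
    refine ⟨antitone_const, fun z => zero_le_one, fun z => zero_le_one, fun x _ => le_rfl⟩
  | succ k ih =>
    obtain ⟨hA, hP, hPn, hle⟩ := ih
    simp only [Function.iterate_succ_apply']
    refine ⟨Qop_antitone hA hP, Qop_nonneg hP, Qnop_nonneg hn hPn, ?_⟩
    intro x hx
    apply integral_mono_of_nonneg
    · refine (ae_restrict_iff' measurableSet_Ioc).2 (Filter.Eventually.of_forall ?_)
      intro y hy
      exact mul_nonneg
        (Real.rpow_nonneg ((hy.1.trans_le (le_ceilPart hn y)).le) _) (hPn _)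
    · exact integrableOn_antitone_kernel hA hP x (1 - x)
    · refine (ae_restrict_iff' measurableSet_Ioc).2 (Filter.Eventually.of_forall ?_)
      intro y hy
      have hy0 : (0:ℝ) < y := hy.1
      have hcy : y ≤ ceilPart n y := le_ceilPart hn y
      have hcx : x ≤ ceilPart n x := le_ceilPart hn x
      have h1 : (ceilPart n y) ^ (-(1:ℝ)/2) ≤ y ^ (-(1:ℝ)/2) :=
        Real.rpow_le_rpow_of_nonpos hy0 hcy (by norm_num)
      have h2 : (Qnop n)^[k] (fun _ => 1) (ceilPart n x + ceilPart n y) ≤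
          Qop^[k] (fun _ => 1) (x + y) := by
        refine (hle _ ?_).trans (hA ?_)
        · exact add_nonneg (hx.trans hcx) ((hy0.trans_le hcy).le)
        gcongr
      exact mul_le_mul h1 h2 (hPn _) (Real.rpow_nonneg hy0.le _)



def simplexSet (k : ℕ) (x : ℝ) : Set (Fin k → ℝ) :=
  {θ | StrictMono θ ∧ (∀ i, x < θ i) ∧ ∀ i, θ i ≤ 1}

def dens (k : ℕ) (x : ℝ) (θ : Fin k → ℝ) : ℝ :=
  ∏ i : Fin k,
    (θ i - if (i : ℕ) = 0 then x
      else θ ⟨(i : ℕ) - 1, lt_of_le_of_lt (Nat.sub_le _ _) i.isLt⟩) ^ (-(1 : ℝ) / 2)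

lemma dens_zero (k : ℕ) : dens k 0 = simplexDensity k := rfl

lemma measurableSet_simplexSet (k : ℕ) (x : ℝ) : MeasurableSet (simplexSet k x) := by
  have h : simplexSet k x =
      (⋂ (i : Fin k) (j : Fin k) (_ : i < j), {θ : Fin k → ℝ | θ i < θ j}) ∩
      ((⋂ i : Fin k, {θ : Fin k → ℝ | x < θ i}) ∩ ⋂ i : Fin k, {θ : Fin k → ℝ | θ i ≤ 1}) := by
    ext θ
    simp only [simplexSet, Set.mem_setOf_eq, Set.mem_inter_iff, Set.mem_iInter, StrictMono]
    try tauto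
  rw [h]
  refine MeasurableSet.inter ?_ (MeasurableSet.inter ?_ ?_)
  · exact MeasurableSet.iInter fun i => MeasurableSet.iInter fun j =>
      MeasurableSet.iInter fun _ => measurableSet_lt (measurable_pi_apply i) (measurable_pi_apply j)
  · exact MeasurableSet.iInter fun i => measurableSet_lt measurable_const (measurable_pi_apply i)
  · exact MeasurableSet.iInter fun i => measurableSet_le (measurable_pi_apply i) measurable_const

lemma measurable_rpow_c : Measurable fun t : ℝ => t ^ (-(1:ℝ)/2) := by measurability

lemma measurable_dens (k : ℕ) (x : ℝ) : Measurable (dens k x) := by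
  apply Finset.measurable_prod
  intro i _
  refine measurable_rpow_c.comp ?_
  by_cases hi : (i : ℕ) = 0 <;> simp only [hi, if_true, if_false, if_pos, if_neg, hi] <;>
    first
    | exact (measurable_pi_apply i).sub measurable_const
    | exact (measurable_pi_apply i).sub (measurable_pi_apply _)

def G (k : ℕ) (x : ℝ) : ENNReal := ∫⁻ θ in simplexSet k x, ENNReal.ofReal (dens k x θ)

def ins {k : ℕ} (t : ℝ) (u : Fin k → ℝ) : Fin (k+1) → ℝ :=
  Fin.insertNth (α := fun _ : Fin (k+1) => ℝ) 0 t u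

lemma ins_zero {k : ℕ} (t : ℝ) (u : Fin k → ℝ) : ins t u 0 = t :=
  Fin.insertNth_apply_same (α := fun _ : Fin (k+1) => ℝ) 0 t u

lemma insertNth_succ {k : ℕ} (t : ℝ) (u : Fin k → ℝ) (j : Fin k) :
    ins t u j.succ = u j := by
  have := Fin.insertNth_apply_succAbove (α := fun _ : Fin (k+1) => ℝ) (0 : Fin (k+1)) t u j
  rw [ins]
  rw [show (Fin.succ j) = (0 : Fin (k+1)).succAbove j by rw [Fin.succAbove_zero]]
  exact this

lemma insert_mem_iff {k : ℕ} {x t : ℝ} {u : Fin k → ℝ} :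
    ins t u ∈ simplexSet (k+1) x ↔
      t ∈ Set.Ioc x 1 ∧ u ∈ simplexSet k t := by
  have h0 : ins t u 0 = t := ins_zero t u
  constructor
  · rintro ⟨hsm, hgt, hle⟩
    refine ⟨⟨by simpa [h0] using hgt 0, by simpa [h0] using hle 0⟩, ?_, ?_, ?_⟩
    · intro i j hij
      have := hsm (show (i.succ : Fin (k+1)) < j.succ from Fin.succ_lt_succ_iff.mpr hij)
      rwa [insertNth_succ, insertNth_succ] at this
    · intro i
      have := hsm (Fin.succ_pos i)
      rwa [h0, insertNth_succ] at this
    · intro i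
      have := hle i.succ
      rwa [insertNth_succ] at this
  · rintro ⟨⟨hxt, ht1⟩, hsm, hgt, hle⟩
    refine ⟨?_, ?_, ?_⟩
    · intro a b hab
      rcases Fin.eq_zero_or_eq_succ a with rfl | ⟨a', rfl⟩
      · rcases Fin.eq_zero_or_eq_succ b with rfl | ⟨b', rfl⟩
        · exact absurd hab (lt_irrefl _)
        · rw [h0, insertNth_succ]; exact hgt b'
      · rcases Fin.eq_zero_or_eq_succ b with rfl | ⟨b', rfl⟩
        · exact absurd hab (by simp)
        · rw [insertNth_succ, insertNth_succ]
          exact hsm (Fin.succ_lt_succ_iff.mp hab)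
    · intro i
      rcases Fin.eq_zero_or_eq_succ i with rfl | ⟨i', rfl⟩
      · rwa [h0]
      · rw [insertNth_succ]; exact hxt.trans (hgt i')
    · intro i
      rcases Fin.eq_zero_or_eq_succ i with rfl | ⟨i', rfl⟩
      · rwa [h0]
      · rw [insertNth_succ]; exact hle i'

lemma ins_cast {k : ℕ} (t : ℝ) (u : Fin k → ℝ) (m : ℕ) (h : m < k+1) (hk : m - 1 < k) :
    ins t u ⟨m, h⟩ = if m = 0 then t else u ⟨m-1, hk⟩ := by
  rcases Nat.eq_zero_or_pos m with rfl | hm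
  · rw [if_pos rfl, show (⟨0, h⟩ : Fin (k+1)) = 0 from rfl, ins_zero]
  · rw [if_neg hm.ne',
      show (⟨m, h⟩ : Fin (k+1)) = (⟨m-1, hk⟩ : Fin k).succ from
        Fin.eq_of_val_eq (by simp only [Fin.val_succ]; omega),
      insertNth_succ]

lemma dens_insert (k : ℕ) (x t : ℝ) (u : Fin k → ℝ) :
    dens (k+1) x (ins t u) =
      (t - x) ^ (-(1:ℝ)/2) * dens k t u := by
  have h0 : ins t u 0 = t := ins_zero t u
  rw [dens, dens, Fin.prod_univ_succ]
  have h1 : ∀ i : Fin k,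
      (ins t u i.succ - if ((i.succ : Fin (k+1)) : ℕ) = 0 then x
        else ins t u ⟨((i.succ : Fin (k+1)) : ℕ) - 1,
          lt_of_le_of_lt (Nat.sub_le _ _) (i.succ).isLt⟩) ^ (-(1:ℝ)/2) =
      (u i - if (i : ℕ) = 0 then t
        else u ⟨(i : ℕ) - 1, lt_of_le_of_lt (Nat.sub_le _ _) i.isLt⟩) ^ (-(1:ℝ)/2) := by
    intro i
    refine congrArg (fun z : ℝ => z ^ (-(1:ℝ)/2)) ?_
    rw [insertNth_succ]
    congr 1
    have hv : ((i.succ : Fin (k+1)) : ℕ) - 1 = (i : ℕ) := rfl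
    rw [if_neg (by simp [Fin.val_succ] : ¬ ((i.succ : Fin (k+1)) : ℕ) = 0)]
    rw [show (⟨((i.succ : Fin (k+1)) : ℕ) - 1,
        lt_of_le_of_lt (Nat.sub_le _ _) (i.succ).isLt⟩ : Fin (k+1)) =
        ⟨(i : ℕ), by omega⟩ from Fin.eq_of_val_eq hv]
    rw [ins_cast t u (i : ℕ) _ (by omega : (i : ℕ) - 1 < k)]
  rw [Finset.prod_congr rfl (fun i _ => h1 i)]
  have h2 : (ins t u 0 - if ((0 : Fin (k+1)) : ℕ) = 0 then x
      else ins t u ⟨((0 : Fin (k+1)) : ℕ) - 1,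
        lt_of_le_of_lt (Nat.sub_le _ _) (0 : Fin (k+1)).isLt⟩) ^ (-(1:ℝ)/2) =
      (t - x) ^ (-(1:ℝ)/2) := by
    rw [h0]; norm_num
  rw [h2]

lemma measurable_F (k : ℕ) (x : ℝ) :
    Measurable ((simplexSet k x).indicator (fun θ => ENNReal.ofReal (dens k x θ))) :=
  ((measurable_dens k x).ennreal_ofReal).indicator (measurableSet_simplexSet k x)

lemma G_succ (k : ℕ) (x : ℝ) :
    G (k+1) x = ∫⁻ t in Set.Ioc x 1,
      ENNReal.ofReal ((t - x) ^ (-(1:ℝ)/2)) * G k t := by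
  classical
  set F := (simplexSet (k+1) x).indicator
    (fun θ => ENNReal.ofReal (dens (k+1) x θ)) with hF
  have hFmeas : Measurable F := measurable_F (k+1) x
  let e := MeasurableEquiv.piFinSuccAbove (fun _ : Fin (k+1) => ℝ) 0
  have hmp : MeasurePreserving e.symm
      ((volume : Measure ℝ).prod (Measure.pi fun _ : Fin k => (volume : Measure ℝ)))
      (Measure.pi fun _ : Fin (k+1) => (volume : Measure ℝ)) :=
    MeasurePreserving.symm e
      (measurePreserving_piFinSuccAbove (fun _ : Fin (k+1) => (volume : Measure ℝ)) 0)
  have h1 : G (k+1) x = ∫⁻ θ, F θ := by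
    rw [hF, lintegral_indicator (measurableSet_simplexSet _ _)]; rfl
  have h2 : (∫⁻ θ, F θ) = ∫⁻ p, F (e.symm p)
      ∂((volume : Measure ℝ).prod (Measure.pi fun _ : Fin k => (volume : Measure ℝ))) := by
    rw [show (volume : Measure (Fin (k+1) → ℝ)) =
      Measure.pi fun _ : Fin (k+1) => (volume : Measure ℝ) from volume_pi]
    exact (hmp.lintegral_comp hFmeas).symm
  have hins : ∀ (t : ℝ) (u : Fin k → ℝ), e.symm (t, u) = ins t u := fun _ _ => rfl
  rw [h1, h2, lintegral_prod (fun p => F (e.symm p))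
    ((hFmeas.comp e.symm.measurable).aemeasurable)]
  rw [← lintegral_indicator measurableSet_Ioc]
  apply lintegral_congr
  intro t
  by_cases ht : t ∈ Set.Ioc x 1
  · rw [Set.indicator_of_mem ht]
    have key : ∀ u : Fin k → ℝ, F (e.symm (t, u)) = (simplexSet k t).indicator
        (fun u => ENNReal.ofReal ((t - x) ^ (-(1:ℝ)/2)) *
          ENNReal.ofReal (dens k t u)) u := by
      intro u
      rw [hins]
      by_cases hu : u ∈ simplexSet k t
      · rw [Set.indicator_of_mem hu, hF, Set.indicator_of_mem (insert_mem_iff.mpr ⟨ht, hu⟩),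
          dens_insert, ENNReal.ofReal_mul (Real.rpow_nonneg (by linarith [ht.1]) _)]
      · rw [Set.indicator_of_notMem hu, hF, Set.indicator_of_notMem
          (fun hmem => hu (insert_mem_iff.mp hmem).2)]
    simp_rw [key]
    rw [lintegral_indicator (measurableSet_simplexSet k t)]
    rw [lintegral_const_mul _ ((measurable_dens k t).ennreal_ofReal)]
    rw [G, show Measure.pi (fun _ : Fin k => (volume : Measure ℝ)) =
      (volume : Measure (Fin k → ℝ)) from volume_pi.symm]
  · rw [Set.indicator_of_notMem ht]
    have key : ∀ u : Fin k → ℝ, F (e.symm (t, u)) = 0 := by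
      intro u
      rw [hins, hF, Set.indicator_of_notMem (fun hmem => ht (insert_mem_iff.mp hmem).1)]
    simp_rw [key]
    exact lintegral_zero


lemma integrableOn_shifted {f : ℝ → ℝ} (hf : Antitone f) (hf0 : ∀ z, 0 ≤ f z)
    {x : ℝ} (hx1 : x ≤ 1) :
    IntegrableOn (fun t => (t - x) ^ (-(1:ℝ)/2) * f t) (Set.Ioc x 1) := by
  have h0 : IntegrableOn (fun y => y ^ (-(1:ℝ)/2) * f (x + y)) (Set.Ioc 0 (1-x)) :=
    integrableOn_antitone_kernel hf hf0 x (1-x)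
  have h1 : IntervalIntegrable (fun y => y ^ (-(1:ℝ)/2) * f (x + y)) volume 0 (1-x) := by
    rw [intervalIntegrable_iff, Set.uIoc_of_le (by linarith)]
    exact h0
  have h2 := h1.comp_sub_right x
  rw [show (0:ℝ) + x = x by ring, show (1 - x) + x = 1 by ring] at h2
  rw [intervalIntegrable_iff, Set.uIoc_of_le hx1] at h2
  have heq : (fun t => (fun y => y ^ (-(1:ℝ)/2) * f (x + y)) (t - x)) =
      fun t => (t - x) ^ (-(1:ℝ)/2) * f t := by
    funext t
    have hxt : x + (t - x) = t := by ring
    simp only [hxt]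
  rwa [heq] at h2

lemma integral_shifted (f : ℝ → ℝ) {x : ℝ} (hx1 : x ≤ 1) :
    ∫ t in Set.Ioc x 1, (t - x) ^ (-(1:ℝ)/2) * f t = Qop f x := by
  have hfun : (fun t => (fun y => y ^ (-(1:ℝ)/2) * f (x + y)) (t - x)) =
      fun t => (t - x) ^ (-(1:ℝ)/2) * f t := by
    funext t
    have hxt : x + (t - x) = t := by ring
    simp only [hxt]
  rw [← intervalIntegral.integral_of_le hx1, ← hfun]
  have h3 := intervalIntegral.integral_comp_sub_right (a := x) (b := 1)
    (fun y => y ^ (-(1:ℝ)/2) * f (x + y)) x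
  rw [h3, show x - x = (0:ℝ) by ring]
  rw [intervalIntegral.integral_of_le (by linarith : (0:ℝ) ≤ 1 - x), Qop]

lemma G_eq (k : ℕ) : ∀ x ∈ Set.Icc (0:ℝ) 1,
    G k x = ENNReal.ofReal (Qop^[k] (fun _ => 1) x) := by
  induction k with
  | zero =>
    intro x _
    have hset : simplexSet 0 x = Set.univ := by
      ext θ
      exact ⟨fun _ => trivial, fun _ =>
        ⟨Subsingleton.strictMono θ, fun i => i.elim0, fun i => i.elim0⟩⟩
    have hdens : ∀ θ : Fin 0 → ℝ, dens 0 x θ = 1 := fun θ => by simp [dens]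
    rw [G, hset, Measure.restrict_univ]
    simp only [hdens]
    rw [lintegral_const]
    have huniv : (volume : Measure (Fin 0 → ℝ)) Set.univ = 1 := by
      rw [show (volume : Measure (Fin 0 → ℝ)) =
        Measure.pi fun _ : Fin 0 => (volume : Measure ℝ) from volume_pi, Measure.pi_univ]
      simp
    rw [huniv, mul_one]
    simp
  | succ k ih =>
    intro x hx
    set f := Qop^[k] (fun _ => 1) with hfdef
    obtain ⟨hA, hP, -, -⟩ := part1 (n := 1) Nat.one_pos k
    rw [G_succ]
    have hcongr : (∫⁻ t in Set.Ioc x 1, ENNReal.ofReal ((t - x) ^ (-(1:ℝ)/2)) * G k t)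
        = ∫⁻ t in Set.Ioc x 1, ENNReal.ofReal ((t - x) ^ (-(1:ℝ)/2) * f t) := by
      apply setLIntegral_congr_fun measurableSet_Ioc
      intro t ht
      beta_reduce
      rw [ih t ⟨le_trans hx.1 ht.1.le, ht.2⟩,
        ← ENNReal.ofReal_mul (Real.rpow_nonneg (by linarith [ht.1]) _)]
    rw [hcongr,
      ← ofReal_integral_eq_lintegral_ofReal (integrableOn_shifted hA hP hx.2)
        ((ae_restrict_iff' measurableSet_Ioc).2 (Filter.Eventually.of_forall fun t ht =>
          mul_nonneg (Real.rpow_nonneg (by linarith [ht.1]) _) (hP t))),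
      integral_shifted f hx.2, Function.iterate_succ_apply']

lemma Jint_eq_f (k : ℕ) : Jint k = (Qop^[k] (fun _ => 1)) 0 := by
  obtain ⟨hA, hP, -, -⟩ := part1 (n := 1) Nat.one_pos k
  have h2 : Jint k = (∫⁻ θ in simplexSet k 0, ENNReal.ofReal (dens k 0 θ)).toReal := by
    apply integral_eq_lintegral_of_nonneg_ae
    · refine (ae_restrict_iff' (measurableSet_simplexSet k 0)).2
        (Filter.Eventually.of_forall ?_)
      intro θ hθ
      apply Finset.prod_nonneg
      intro i _
      apply Real.rpow_nonneg
      rcases hθ with ⟨hsm, hpos, -⟩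
      by_cases hi : (i:ℕ) = 0
      · rw [if_pos hi]; linarith [hpos i]
      · rw [if_neg hi]
        have hlt : (⟨(i:ℕ)-1, lt_of_le_of_lt (Nat.sub_le _ _) i.isLt⟩ : Fin k) < i := by
          rw [Fin.lt_def]; simp; omega
        linarith [hsm hlt]
    · exact (measurable_dens k 0).aestronglyMeasurable
  rw [h2, show (∫⁻ θ in simplexSet k 0, ENNReal.ofReal (dens k 0 θ)) = G k 0 from rfl,
    G_eq k 0 ⟨le_rfl, zero_le_one⟩, ENNReal.toReal_ofReal (hP 0)]


/-! ### Discrete side -/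

def dSet (n k t : ℕ) : Finset (Fin k → ℕ) :=
  (Fintype.piFinset fun _ : Fin k => Finset.Icc 1 n).filter
    (fun s => (∀ i j : Fin k, i < j → s i < s j) ∧ ∀ i, t < s i)

def Pd (n t : ℕ) {k : ℕ} (s : Fin k → ℕ) : ℝ :=
  ∏ i : Fin k,
    ((s i : ℝ) / n - (if (i : ℕ) = 0 then (t : ℝ)
      else (s ⟨(i : ℕ) - 1, lt_of_le_of_lt (Nat.sub_le _ _) i.isLt⟩ : ℝ)) / n) ^ (-(1:ℝ)/2)

def P (n k t : ℕ) : ℝ := ((n : ℝ) ^ k)⁻¹ * ∑ s ∈ dSet n k t, Pd n t s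

lemma helpercns : True := trivial

def cns {k : ℕ} (m : ℕ) (u : Fin k → ℕ) : Fin (k+1) → ℕ :=
  Fin.cons (α := fun _ : Fin (k+1) => ℕ) m u

@[simp] lemma cns_zero {k : ℕ} (m : ℕ) (u : Fin k → ℕ) : cns m u 0 = m := rfl

@[simp] lemma cns_succ {k : ℕ} (m : ℕ) (u : Fin k → ℕ) (i : Fin k) :
    cns m u i.succ = u i := by
  simp [cns]

@[simp] lemma cns_tail {k : ℕ} (m : ℕ) (u : Fin k → ℕ) : Fin.tail (cns m u) = u := by
  funext i; simp [Fin.tail, cns]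

lemma cns_self_tail {k : ℕ} (s : Fin (k+1) → ℕ) : cns (s 0) (Fin.tail s) = s :=
  Fin.cons_self_tail (α := fun _ : Fin (k+1) => ℕ) s

lemma cons_cast {k : ℕ} (m : ℕ) (u : Fin k → ℕ) (a : ℕ) (h : a < k+1) (hk : a - 1 < k) :
    cns m u ⟨a, h⟩ = if a = 0 then m else u ⟨a-1, hk⟩ := by
  rcases Nat.eq_zero_or_pos a with rfl | ha
  · rw [if_pos rfl, show (⟨0, h⟩ : Fin (k+1)) = 0 from rfl, cns_zero]
  · rw [if_neg ha.ne',
      show (⟨a, h⟩ : Fin (k+1)) = (⟨a-1, hk⟩ : Fin k).succ from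
        Fin.eq_of_val_eq (by simp only [Fin.val_succ]; omega),
      cns_succ]

lemma Pd_cons (n t : ℕ) {k : ℕ} (m : ℕ) (u : Fin k → ℕ) :
    Pd n t (cns m u) = ((m : ℝ)/n - (t : ℝ)/n) ^ (-(1:ℝ)/2) * Pd n m u := by
  rw [Pd, Pd, Fin.prod_univ_succ]
  have h1 : ∀ i : Fin k,
      ((cns m u i.succ : ℝ) / n - (if ((i.succ : Fin (k+1)) : ℕ) = 0 then (t : ℝ)
        else (cns m u ⟨((i.succ : Fin (k+1)) : ℕ) - 1,
          lt_of_le_of_lt (Nat.sub_le _ _) (i.succ).isLt⟩ : ℝ)) / n) ^ (-(1:ℝ)/2) =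
      ((u i : ℝ) / n - (if (i : ℕ) = 0 then (m : ℝ)
        else (u ⟨(i : ℕ) - 1, lt_of_le_of_lt (Nat.sub_le _ _) i.isLt⟩ : ℝ)) / n) ^ (-(1:ℝ)/2) := by
    intro i
    refine congrArg (fun z : ℝ => z ^ (-(1:ℝ)/2)) ?_
    rw [cns_succ]
    congr 2
    rw [if_neg (by simp [Fin.val_succ] : ¬ ((i.succ : Fin (k+1)) : ℕ) = 0)]
    rw [show (⟨((i.succ : Fin (k+1)) : ℕ) - 1,
        lt_of_le_of_lt (Nat.sub_le _ _) (i.succ).isLt⟩ : Fin (k+1)) =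
        ⟨(i : ℕ), by omega⟩ from Fin.eq_of_val_eq rfl]
    rw [cons_cast m u (i : ℕ) _ (by omega : (i : ℕ) - 1 < k)]
    split_ifs <;> rfl
  rw [Finset.prod_congr rfl (fun i _ => h1 i)]
  have h2 : ((cns m u (0 : Fin (k+1)) : ℝ) / n -
      (if ((0 : Fin (k+1)) : ℕ) = 0 then (t : ℝ)
        else (cns m u ⟨((0 : Fin (k+1)) : ℕ) - 1,
          lt_of_le_of_lt (Nat.sub_le _ _) (0 : Fin (k+1)).isLt⟩ : ℝ)) / n) ^ (-(1:ℝ)/2) =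
      ((m : ℝ)/n - (t : ℝ)/n) ^ (-(1:ℝ)/2) := by
    rw [cns_zero]; norm_num
  rw [h2]

lemma cons_mem_dSet_iff {n k t : ℕ} {m : ℕ} {u : Fin k → ℕ} (hm : m ∈ Finset.Icc (t+1) n) :
    cns m u ∈ dSet n (k+1) t ↔ u ∈ dSet n k m := by
  rw [Finset.mem_Icc] at hm
  simp only [dSet, Finset.mem_filter, Fintype.mem_piFinset]
  constructor
  · rintro ⟨hpi, hsm, hgt⟩
    refine ⟨fun i => by simpa [cns_succ] using hpi i.succ, ?_, ?_⟩
    · intro i j hij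
      have := hsm i.succ j.succ (Fin.succ_lt_succ_iff.mpr hij)
      simpa [cns_succ] using this
    · intro i
      have := hsm 0 i.succ (Fin.succ_pos i)
      simpa [cns_zero, cns_succ] using this
  · rintro ⟨hpi, hsm, hgt⟩
    refine ⟨?_, ?_, ?_⟩
    · intro i
      rcases Fin.eq_zero_or_eq_succ i with rfl | ⟨i', rfl⟩
      · simpa [cns_zero, Finset.mem_Icc] using ⟨by omega, hm.2⟩
      · simpa [cns_succ] using hpi i'
    · intro i j hij
      rcases Fin.eq_zero_or_eq_succ i with rfl | ⟨i', rfl⟩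
      · rcases Fin.eq_zero_or_eq_succ j with rfl | ⟨j', rfl⟩
        · exact absurd hij (lt_irrefl _)
        · simpa [cns_zero, cns_succ] using hgt j'
      · rcases Fin.eq_zero_or_eq_succ j with rfl | ⟨j', rfl⟩
        · exact absurd hij (by simp)
        · simpa [cns_succ] using hsm i' j' (Fin.succ_lt_succ_iff.mp hij)
    · intro i
      rcases Fin.eq_zero_or_eq_succ i with rfl | ⟨i', rfl⟩
      · simpa [cns_zero] using by omega
      · simp only [cns_succ]
        exact lt_trans (by omega) (hgt i')

lemma mem_sigma_of_mem {n k t : ℕ} {s : Fin (k+1) → ℕ} (hs : s ∈ dSet n (k+1) t) :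
    s 0 ∈ Finset.Icc (t+1) n ∧ Fin.tail s ∈ dSet n k (s 0) := by
  have hs' := hs
  simp only [dSet, Finset.mem_filter, Fintype.mem_piFinset] at hs'
  obtain ⟨hpi, hsm, hgt⟩ := hs'
  have h0 : s 0 ∈ Finset.Icc (t+1) n := by
    have := hpi 0
    rw [Finset.mem_Icc] at this ⊢
    exact ⟨by have := hgt 0; omega, this.2⟩
  refine ⟨h0, ?_⟩
  rw [← cons_mem_dSet_iff h0, cns_self_tail]
  exact hs

lemma sum_dSet_succ (n k t : ℕ) :
    ∑ s ∈ dSet n (k+1) t, Pd n t s =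
    ∑ m ∈ Finset.Icc (t+1) n, ((m : ℝ)/n - (t : ℝ)/n) ^ (-(1:ℝ)/2) *
      ∑ u ∈ dSet n k m, Pd n m u := by
  have hRHS : ∀ m : ℕ, ((m : ℝ)/n - (t : ℝ)/n) ^ (-(1:ℝ)/2) * ∑ u ∈ dSet n k m, Pd n m u
      = ∑ u ∈ dSet n k m, ((m : ℝ)/n - (t : ℝ)/n) ^ (-(1:ℝ)/2) * Pd n m u := fun m =>
    Finset.mul_sum _ _ _
  simp_rw [hRHS]
  rw [Finset.sum_sigma' (Finset.Icc (t+1) n) (fun m => dSet n k m)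
    (fun m u => ((m : ℝ)/n - (t : ℝ)/n) ^ (-(1:ℝ)/2) * Pd n m u)]
  refine Finset.sum_bij' (fun s _ => ⟨s 0, Fin.tail s⟩)
    (fun p _ => cns p.1 p.2) ?_ ?_ ?_ ?_ ?_
  · intro s hs
    obtain ⟨h0, htail⟩ := mem_sigma_of_mem hs
    exact Finset.mem_sigma.mpr ⟨h0, htail⟩
  · intro p hp
    rw [Finset.mem_sigma] at hp
    exact (cons_mem_dSet_iff hp.1).mpr hp.2
  · intro s _
    exact cns_self_tail s
  · intro p hp
    refine Sigma.ext ?_ ?_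
    · simp [cns_zero]
    · simp [cns_tail]
  · intro s hs
    conv_lhs => rw [← cns_self_tail s]
    rw [Pd_cons]

lemma P_zero (n t : ℕ) : P n 0 t = 1 := by
  have hcard : dSet n 0 t = Fintype.piFinset fun _ : Fin 0 => Finset.Icc 1 n := by
    apply Finset.filter_true_of_mem
    intro s _
    exact ⟨fun i => i.elim0, fun i => i.elim0⟩
  have h1 : ∀ s : Fin 0 → ℕ, Pd n t s = 1 := fun s => by simp [Pd]
  rw [P]
  rw [hcard]
  rw [Finset.sum_congr rfl (fun s _ => h1 s), Finset.sum_const,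
    Fintype.card_piFinset]
  simp

lemma P_succ (n k t : ℕ) :
    P n (k+1) t = ∑ m ∈ Finset.Icc (t+1) n,
      ((n : ℝ))⁻¹ * (((m : ℝ))/n - (t : ℝ)/n) ^ (-(1:ℝ)/2) * P n k m := by
  rw [P, sum_dSet_succ, Finset.mul_sum]
  apply Finset.sum_congr rfl
  intro m _
  rw [P]
  ring


lemma ceilPart_grid {n : ℕ} (hn : 0 < n) (t : ℕ) : ceilPart n ((t:ℝ)/n) = (t:ℝ)/n := by
  have hn' : ((n:ℝ)) ≠ 0 := by positivity
  rw [ceilPart, div_mul_cancel₀ _ hn', Int.ceil_natCast]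
  norm_num

lemma ceilPart_cell {n : ℕ} (hn : 0 < n) {s : ℕ} {y : ℝ}
    (hy : y ∈ Set.Ioc (((s:ℝ)-1)/n) ((s:ℝ)/n)) : ceilPart n y = (s:ℝ)/n := by
  have hnR : (0:ℝ) < n := by exact_mod_cast hn
  have hceil : ⌈y * (n:ℝ)⌉ = (s:ℤ) := by
    rw [Int.ceil_eq_iff]
    constructor
    · have h1 : ((s:ℝ)-1)/n < y := hy.1
      have := (div_lt_iff₀ hnR).mp h1
      push_cast
      linarith
    · have h2 : y ≤ (s:ℝ)/n := hy.2
      have := (le_div_iff₀ hnR).mp h2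
      push_cast
      linarith
  rw [ceilPart, hceil]
  norm_num

lemma cell_sum {n : ℕ} (hn : 0 < n) (m : ℕ) (F : ℝ → ℝ) (c : ℕ → ℝ)
    (hF : ∀ s ∈ Finset.Icc 1 m, ∀ y ∈ Set.Ioc (((s:ℝ)-1)/n) ((s:ℝ)/n), F y = c s) :
    IntegrableOn F (Set.Ioc 0 ((m:ℝ)/n)) ∧
      (∫ y in Set.Ioc (0:ℝ) ((m:ℝ)/n), F y) = ∑ s ∈ Finset.Icc 1 m, c s / n := by
  have hnR : (0:ℝ) < n := by exact_mod_cast hn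
  induction m with
  | zero =>
    constructor
    · simp
    · simp
  | succ m ih =>
    obtain ⟨ihi, ihv⟩ := ih (fun s hs y hy => hF s
      (by rw [Finset.mem_Icc] at hs ⊢; omega) y hy)
    have hm1 : (((m+1:ℕ):ℝ)-1)/n = (m:ℝ)/n := by push_cast; ring_nf
    have hmem : (m+1) ∈ Finset.Icc 1 (m+1) := by rw [Finset.mem_Icc]; omega
    have hcell : ∀ y ∈ Set.Ioc ((m:ℝ)/n) (((m+1:ℕ):ℝ)/n), F y = c (m+1) := by
      intro y hy
      exact hF (m+1) hmem y (by rwa [hm1])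
    have hle1 : (0:ℝ) ≤ (m:ℝ)/n := by positivity
    have hle2 : (m:ℝ)/n ≤ ((m+1:ℕ):ℝ)/n := by
      push_cast
      gcongr <;> linarith
    have hsplit : Set.Ioc (0:ℝ) (((m+1:ℕ):ℝ)/n) =
        Set.Ioc 0 ((m:ℝ)/n) ∪ Set.Ioc ((m:ℝ)/n) (((m+1:ℕ):ℝ)/n) :=
      (Set.Ioc_union_Ioc_eq_Ioc hle1 hle2).symm
    have hdisj : Disjoint (Set.Ioc (0:ℝ) ((m:ℝ)/n))
        (Set.Ioc ((m:ℝ)/n) (((m+1:ℕ):ℝ)/n)) := by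
      rw [Set.Ioc_disjoint_Ioc]
      exact le_trans inf_le_left le_sup_right
    have hIc : IntegrableOn F (Set.Ioc ((m:ℝ)/n) (((m+1:ℕ):ℝ)/n)) := by
      apply Integrable.congr (f := fun _ => c (m+1))
      · exact integrableOn_const measure_Ioc_lt_top.ne
      · refine (ae_restrict_iff' measurableSet_Ioc).2 (Filter.Eventually.of_forall ?_)
        intro y hy
        exact (hcell y hy).symm
    have hvol : (volume (Set.Ioc ((m:ℝ)/n) (((m+1:ℕ):ℝ)/n))).toReal = 1/n := by
      rw [Real.volume_Ioc, ENNReal.toReal_ofReal (by linarith)]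
      push_cast
      field_simp
      ring
    constructor
    · rw [hsplit]
      exact ihi.union hIc
    · rw [hsplit, setIntegral_union hdisj measurableSet_Ioc ihi hIc, ihv]
      have hcellval : (∫ y in Set.Ioc ((m:ℝ)/n) (((m+1:ℕ):ℝ)/n), F y) = c (m+1) / n := by
        rw [setIntegral_congr_fun measurableSet_Ioc hcell, setIntegral_const, measureReal_def, hvol,
          smul_eq_mul]
        ring
      rw [hcellval, Finset.sum_Icc_succ_top (by omega : 1 ≤ m+1)]

lemma grid {n : ℕ} (hn : 0 < n) (k : ℕ) :
    ∀ t, t ≤ n → (Qnop n)^[k] (fun _ => 1) ((t:ℝ)/n) = P n k t := by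
  have hnR : (0:ℝ) < n := by exact_mod_cast hn
  induction k with
  | zero =>
    intro t _
    rw [P_zero]
    simp
  | succ k ih =>
    intro t ht
    rw [Function.iterate_succ_apply', Qnop]
    set g := (Qnop n)^[k] (fun _ => 1) with hg
    have h1mx : 1 - (t:ℝ)/n = ((n - t : ℕ):ℝ)/n := by
      rw [Nat.cast_sub ht]
      field_simp
    simp only [ceilPart_grid hn t, h1mx]
    have hcells : ∀ s ∈ Finset.Icc 1 (n - t), ∀ y ∈ Set.Ioc (((s:ℝ)-1)/n) ((s:ℝ)/n),
        (fun y : ℝ => ceilPart n y ^ (-(1:ℝ)/2) * g ((t:ℝ)/n + ceilPart n y)) y =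
        (fun s : ℕ => ((s:ℝ)/n) ^ (-(1:ℝ)/2) * P n k (t+s)) s := by
      intro s hs y hy
      rw [Finset.mem_Icc] at hs
      simp only []
      rw [ceilPart_cell hn hy]
      have hadd : (t:ℝ)/n + (s:ℝ)/n = ((t+s:ℕ):ℝ)/n := by push_cast; ring
      rw [hadd, ih (t+s) (by omega)]
    obtain ⟨-, hval⟩ := cell_sum hn (n - t)
      (fun y => ceilPart n y ^ (-(1:ℝ)/2) * g ((t:ℝ)/n + ceilPart n y))
      (fun s => ((s:ℝ)/n) ^ (-(1:ℝ)/2) * P n k (t+s)) hcells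
    rw [hval, P_succ]
    have hmap : Finset.Icc (t+1) n =
        Finset.map (addLeftEmbedding t) (Finset.Icc 1 (n - t)) := by
      rw [Finset.map_add_left_Icc, Nat.add_sub_cancel' ht]
    rw [hmap, Finset.sum_map]
    apply Finset.sum_congr rfl
    intro s hs
    have hemb : addLeftEmbedding t s = t + s := rfl
    rw [hemb]
    have hc : ((t+s:ℕ):ℝ)/n - (t:ℝ)/n = (s:ℝ)/n := by push_cast; ring
    rw [hc]
    ring

lemma Jsum_eq_P (n k : ℕ) : Jsum k n = P n k 0 := by
  rw [Jsum, P]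
  congr 1
  have hset : (Fintype.piFinset fun _ : Fin k => Finset.Icc 1 n).filter
      (fun s => ∀ i j : Fin k, i < j → s i < s j) = dSet n k 0 := by
    rw [dSet]
    apply Finset.filter_congr
    intro s hs
    rw [Fintype.mem_piFinset] at hs
    constructor
    · intro h
      refine ⟨h, fun i => ?_⟩
      have := (Finset.mem_Icc.mp (hs i)).1
      omega
    · exact fun h => h.1
  rw [hset]
  apply Finset.sum_congr rfl
  intro s _
  rw [Pd]
  apply Finset.prod_congr rfl
  intro i _
  congr 1
  by_cases hi : (i : ℕ) = 0
  · rw [if_pos hi, if_pos hi]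
    norm_num
  · rw [if_neg hi, if_neg hi]


end QnQ

/-- Iterates of `Q_n` on the constant function `1` are dominated by those of `Q`,
and consequently the Riemann sums `J_{k,n}` are dominated by the simplex integrals `J_k`. -/
theorem Qnop_iterate_le_Qop_iterate (n : ℕ) (hn : 0 < n) :
    (∀ (k : ℕ), ∀ x ∈ Set.Icc (0 : ℝ) 1,
      ((Qnop n)^[k] (fun _ => 1) x) ≤ (Qop^[k] (fun _ => 1) x)) ∧
    ∀ k : ℕ, Jsum k n ≤ Jint k := by
  constructor
  · intro k x hx
    exact (QnQ.part1 hn k).2.2.2 x hx.1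
  · intro k
    have h1 : Jsum k n = QnQ.P n k 0 := QnQ.Jsum_eq_P n k
    have h2 : QnQ.P n k 0 = (Qnop n)^[k] (fun _ => 1) 0 := by
      have h := QnQ.grid hn k 0 (Nat.zero_le n)
      rw [show ((0:ℕ):ℝ)/(n:ℝ) = 0 by norm_num] at h
      exact h.symm
    have h3 := (QnQ.part1 hn k).2.2.2 0 le_rfl
    have h4 : Jint k = Qop^[k] (fun _ => 1) 0 := QnQ.Jint_eq_f k
    rw [h1, h2, h4]
    exact h3

end
end
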